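/- arXiv:2604.23621 — 9 statements merged into one kernel-verified Lean document; each statement's English description precedes it below -/
import Mathlib

section
/- Let L > 0 and let γ : [0, L] → ℝ³ be a continuous map with γ(0) = γ(L) that is injective on [0, L) and has finite total variation V = eVariationOn γ [0, L]. Then V > 2 · Metric.diam (γ '' [0, L]); that is, the length–diameter inequality is strict for embedded simple closed curves, so the infimal ratio 2 of length to diameter is never attained by a simple closed curve. -/
open MeasureTheory Set

/-- In a compact nonempty set, the diameter is attained. -/
lemma my_exists_dist_eq_diam {E : Type*} [MetricSpace E] {s : Set E} (hs : IsCompact s)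
    (hne : s.Nonempty) : ∃ x ∈ s, ∃ y ∈ s, dist x y = Metric.diam s := by
  obtain ⟨⟨x, y⟩, hxy, hmax⟩ := (hs.prod hs).exists_isMaxOn (hne.prod hne)
    ((continuous_dist.comp (continuous_fst.prodMk continuous_snd)).continuousOn)
  refine ⟨x, hxy.1, y, hxy.2, le_antisymm
    (Metric.dist_le_diam_of_mem hs.isBounded hxy.1 hxy.2) ?_⟩
  exact Metric.diam_le_of_forall_dist_le dist_nonneg fun p hp q hq =>
    hmax (Set.mk_mem_prod hp hq)

/-- Uniqueness of a point on a segment at a given distance from an endpoint,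
in a strictly convex space. -/
lemma my_seg_unique {p q x y : EuclideanSpace ℝ (Fin 3)}
    (hx : dist p x + dist x q = dist p q) (hy : dist p y + dist y q = dist p q)
    (hd : dist p x = dist p y) : x = y := by
  rcases eq_or_ne p q with rfl | hpq
  · have hx0 : dist p x = 0 := by
      have := dist_nonneg (x := p) (y := x)
      have := dist_nonneg (x := x) (y := p)
      have : dist p x + dist x p = 0 := by rw [hx, dist_self]
      have := dist_nonneg (x := p) (y := x); have := dist_nonneg (x := x) (y := p)
      nlinarith [dist_nonneg (x := p) (y := x), dist_nonneg (x := x) (y := p)]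
    have hy0 : dist p y = 0 := by rw [← hd, hx0]
    rw [dist_eq_zero] at hx0 hy0
    rw [← hx0, ← hy0]
  · have hwx : Wbtw ℝ p x q := dist_add_dist_eq_iff.mp hx
    have hwy : Wbtw ℝ p y q := dist_add_dist_eq_iff.mp hy
    rw [← mem_segment_iff_wbtw, segment_eq_image_lineMap] at hwx hwy
    obtain ⟨s, hs, rfl⟩ := hwx
    obtain ⟨t, ht, rfl⟩ := hwy
    have hds : dist p (AffineMap.lineMap p q s) = s * dist p q := by
      rw [dist_left_lineMap, Real.norm_eq_abs, abs_of_nonneg hs.1]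
    have hdt : dist p (AffineMap.lineMap p q t) = t * dist p q := by
      rw [dist_left_lineMap, Real.norm_eq_abs, abs_of_nonneg ht.1]
    have hdpq : dist p q ≠ 0 := dist_ne_zero.mpr hpq
    have : s = t := by
      have : s * dist p q = t * dist p q := by rw [← hds, ← hdt, hd]
      exact mul_right_cancel₀ hdpq this
    rw [this]

/-- If the variation of an arc equals the distance between its endpoints, then
every point of the arc realizes equality in the triangle inequality. -/
lemma my_straight_arc {γ : ℝ → EuclideanSpace ℝ (Fin 3)} {u v : ℝ}
    (hfin : eVariationOn γ (Set.Icc u v) ≠ ⊤)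
    (hvar : (eVariationOn γ (Set.Icc u v)).toReal ≤ dist (γ u) (γ v)) :
    ∀ t ∈ Set.Icc u v, dist (γ u) (γ t) + dist (γ t) (γ v) = dist (γ u) (γ v) := by
  intro t ht
  have h1le : eVariationOn γ (Set.Icc u t) ≤ eVariationOn γ (Set.Icc u v) :=
    eVariationOn.mono γ (Set.Icc_subset_Icc le_rfl ht.2)
  have h2le : eVariationOn γ (Set.Icc t v) ≤ eVariationOn γ (Set.Icc u v) :=
    eVariationOn.mono γ (Set.Icc_subset_Icc ht.1 le_rfl)
  have h1f : eVariationOn γ (Set.Icc u t) ≠ ⊤ := ne_top_of_le_ne_top hfin h1le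
  have h2f : eVariationOn γ (Set.Icc t v) ≠ ⊤ := ne_top_of_le_ne_top hfin h2le
  have hsum : eVariationOn γ (Set.Icc u t) + eVariationOn γ (Set.Icc t v)
      = eVariationOn γ (Set.Icc u v) := by
    have := eVariationOn.Icc_add_Icc γ (s := Set.univ) ht.1 ht.2 (Set.mem_univ t)
    simpa using this
  have e1 : dist (γ u) (γ t) ≤ (eVariationOn γ (Set.Icc u t)).toReal := by
    have h := eVariationOn.edist_le γ (Set.left_mem_Icc.2 ht.1) (Set.right_mem_Icc.2 ht.1)
    rw [edist_dist] at h
    exact (ENNReal.ofReal_le_iff_le_toReal h1f).mp h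
  have e2 : dist (γ t) (γ v) ≤ (eVariationOn γ (Set.Icc t v)).toReal := by
    have h := eVariationOn.edist_le γ (Set.left_mem_Icc.2 ht.2) (Set.right_mem_Icc.2 ht.2)
    rw [edist_dist] at h
    exact (ENNReal.ofReal_le_iff_le_toReal h2f).mp h
  have hsumr : (eVariationOn γ (Set.Icc u t)).toReal + (eVariationOn γ (Set.Icc t v)).toReal
      = (eVariationOn γ (Set.Icc u v)).toReal := by
    rw [← ENNReal.toReal_add h1f h2f, hsum]
  have htri := dist_triangle (γ u) (γ t) (γ v)
  linarith

theorem length_gt_two_diam_of_simple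
    (L : ℝ) (hL : 0 < L) (γ : ℝ → EuclideanSpace ℝ (Fin 3))
    (hγ : ContinuousOn γ (Set.Icc 0 L)) (hclosed : γ 0 = γ L)
    (hinj : Set.InjOn γ (Set.Ico 0 L))
    (hfin : eVariationOn γ (Set.Icc 0 L) ≠ ⊤) :
    2 * ENNReal.ofReal (Metric.diam (γ '' Set.Icc 0 L)) <
      eVariationOn γ (Set.Icc 0 L) := by
  set D := Metric.diam (γ '' Set.Icc 0 L) with hDdef
  have hK : IsCompact (γ '' Set.Icc 0 L) := isCompact_Icc.image_of_continuousOn hγ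
  have hD0 : 0 < D := by
    rcases lt_or_eq_of_le (Metric.diam_nonneg (s := γ '' Set.Icc 0 L)) with h | h
    · exact h
    · exfalso
      have h0m : γ 0 ∈ γ '' Set.Icc 0 L := ⟨0, ⟨le_rfl, hL.le⟩, rfl⟩
      have hhm : γ (L/2) ∈ γ '' Set.Icc 0 L := ⟨L/2, ⟨by linarith, by linarith⟩, rfl⟩
      have hle := Metric.dist_le_diam_of_mem hK.isBounded h0m hhm
      have heq : γ 0 = γ (L/2) := by
        rw [← dist_le_zero]
        exact hle.trans_eq h.symm
      have := hinj ⟨le_rfl, hL⟩ ⟨by linarith, by linarith⟩ heq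
      linarith
  -- get a diameter-attaining pair a ≤ b
  obtain ⟨a, ha, b, hb, hab, hdab⟩ :
      ∃ a ∈ Set.Icc 0 L, ∃ b ∈ Set.Icc 0 L, a ≤ b ∧ dist (γ a) (γ b) = D := by
    obtain ⟨x, hx, y, hy, hxy⟩ := my_exists_dist_eq_diam hK ⟨γ 0, 0, ⟨le_rfl, hL.le⟩, rfl⟩
    obtain ⟨a', ha', rfl⟩ := hx
    obtain ⟨b', hb', rfl⟩ := hy
    rcases le_total a' b' with h | h
    · exact ⟨a', ha', b', hb', h, hxy⟩
    · exact ⟨b', hb', a', ha', h, by rw [dist_comm]; exact hxy⟩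
  have haltb : a < b := by
    rcases lt_or_eq_of_le hab with h | h
    · exact h
    · exfalso; rw [h, dist_self] at hdab; linarith
  set V1 := eVariationOn γ (Set.Icc 0 a) with hV1def
  set V2 := eVariationOn γ (Set.Icc a b) with hV2def
  set V3 := eVariationOn γ (Set.Icc b L) with hV3def
  have hs1 : V1 + eVariationOn γ (Set.Icc a L) = eVariationOn γ (Set.Icc 0 L) := by
    have := eVariationOn.Icc_add_Icc γ (s := Set.univ) ha.1 ha.2 (Set.mem_univ a)
    simpa using this
  have hs2 : V2 + V3 = eVariationOn γ (Set.Icc a L) := by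
    have := eVariationOn.Icc_add_Icc γ (s := Set.univ) hab hb.2 (Set.mem_univ b)
    simpa using this
  have hVeq : eVariationOn γ (Set.Icc 0 L) = V2 + (V3 + V1) := by
    rw [← hs1, ← hs2]; ring
  have hV1f : V1 ≠ ⊤ :=
    ne_top_of_le_ne_top hfin (eVariationOn.mono γ (Set.Icc_subset_Icc le_rfl ha.2))
  have hV2f : V2 ≠ ⊤ :=
    ne_top_of_le_ne_top hfin (eVariationOn.mono γ (Set.Icc_subset_Icc ha.1 hb.2))
  have hV3f : V3 ≠ ⊤ :=
    ne_top_of_le_ne_top hfin (eVariationOn.mono γ (Set.Icc_subset_Icc hb.1 le_rfl))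
  have h31f : V3 + V1 ≠ ⊤ := by
    simp [ENNReal.add_ne_top, hV3f, hV1f]
  have hA : ENNReal.ofReal D ≤ V2 := by
    have h := eVariationOn.edist_le γ (Set.left_mem_Icc.2 hab) (Set.right_mem_Icc.2 hab)
    rwa [edist_dist, hdab] at h
  have hB : ENNReal.ofReal D ≤ V3 + V1 := by
    calc ENNReal.ofReal D = edist (γ b) (γ a) := by
          rw [edist_dist, dist_comm, hdab]
      _ ≤ edist (γ b) (γ L) + edist (γ L) (γ a) := edist_triangle _ _ _
      _ = edist (γ b) (γ L) + edist (γ 0) (γ a) := by rw [hclosed]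
      _ ≤ V3 + V1 := add_le_add
          (eVariationOn.edist_le γ (Set.left_mem_Icc.2 hb.2) (Set.right_mem_Icc.2 hb.2))
          (eVariationOn.edist_le γ (Set.left_mem_Icc.2 ha.1) (Set.right_mem_Icc.2 ha.1))
  have hge : 2 * ENNReal.ofReal D ≤ eVariationOn γ (Set.Icc 0 L) := by
    rw [hVeq, two_mul]
    exact add_le_add hA hB
  rcases hge.lt_or_eq with h | heq
  · exact h
  exfalso
  have hsum2 : V2 + (V3 + V1) = ENNReal.ofReal D + ENNReal.ofReal D := by
    rw [← two_mul, heq, hVeq]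
  have hV2eq : V2 = ENNReal.ofReal D := by
    refine le_antisymm ?_ hA
    have h1 : V2 + (V3 + V1) ≤ ENNReal.ofReal D + (V3 + V1) :=
      hsum2.trans_le (add_le_add_right hB _)
    exact (ENNReal.add_le_add_iff_right h31f).mp h1
  have h31eq : V3 + V1 = ENNReal.ofReal D := by
    have h1 : V2 + (V3 + V1) ≤ V2 + ENNReal.ofReal D :=
      hsum2.trans_le (add_le_add_left hA _)
    refine le_antisymm ((ENNReal.add_le_add_iff_left hV2f).mp h1) hB
  have hV2r : V2.toReal = D := by rw [hV2eq, ENNReal.toReal_ofReal hD0.le]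
  have h31r : V3.toReal + V1.toReal = D := by
    rw [← ENNReal.toReal_add hV3f hV1f, h31eq, ENNReal.toReal_ofReal hD0.le]
  set d3 := dist (γ b) (γ L) with hd3def
  set d1 := dist (γ 0) (γ a) with hd1def
  have e3 : d3 ≤ V3.toReal := by
    have h := eVariationOn.edist_le γ (Set.left_mem_Icc.2 hb.2) (Set.right_mem_Icc.2 hb.2)
    rw [edist_dist] at h
    exact (ENNReal.ofReal_le_iff_le_toReal hV3f).mp h
  have e1 : d1 ≤ V1.toReal := by
    have h := eVariationOn.edist_le γ (Set.left_mem_Icc.2 ha.1) (Set.right_mem_Icc.2 ha.1)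
    rw [edist_dist] at h
    exact (ENNReal.ofReal_le_iff_le_toReal hV1f).mp h
  have htri : D ≤ d3 + d1 := by
    have h1 : dist (γ b) (γ a) ≤ dist (γ b) (γ L) + dist (γ L) (γ a) := dist_triangle _ _ _
    have h2 : dist (γ b) (γ a) = D := by rw [dist_comm, hdab]
    have h3 : dist (γ L) (γ a) = d1 := by rw [← hclosed, hd1def, dist_comm]
    linarith
  have hd3 : V3.toReal = d3 := by linarith
  have hd1 : V1.toReal = d1 := by linarith
  have hdD : d3 + d1 = D := by linarith
  have str2 := my_straight_arc hV2f (le_of_eq (by rw [hV2r, hdab]))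
  have str3 := my_straight_arc hV3f (le_of_eq (by rw [hd3]))
  have str1 := my_straight_arc hV1f (le_of_eq (by rw [hd1]))
  -- find t₁ in [a,b] at distance D/2 from γ a
  have hfc : ContinuousOn (fun t => dist (γ a) (γ t)) (Set.Icc a b) :=
    (continuous_const.dist continuous_id).comp_continuousOn
      (hγ.mono (Set.Icc_subset_Icc ha.1 hb.2))
  have hmem : D / 2 ∈ Set.Icc (dist (γ a) (γ a)) (dist (γ a) (γ b)) := by
    rw [dist_self, hdab]
    exact ⟨by linarith, by linarith⟩
  obtain ⟨t₁, ht₁mem, ht₁⟩ := intermediate_value_Icc hab hfc hmem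
  simp only at ht₁
  have hbtw₁ : dist (γ a) (γ t₁) + dist (γ t₁) (γ b) = dist (γ a) (γ b) :=
    str2 t₁ ht₁mem
  have ht₁a : a < t₁ := by
    rcases lt_or_eq_of_le ht₁mem.1 with h | h
    · exact h
    · exfalso; rw [← h, dist_self] at ht₁; linarith
  have ht₁b : t₁ < b := by
    rcases lt_or_eq_of_le ht₁mem.2 with h | h
    · exact h
    · exfalso; rw [h, hdab] at ht₁; linarith
  rcases le_or_gt (D / 2) d3 with hc | hc
  · -- the point at distance D/2 from γ b lies on [b, L]
    have hgc : ContinuousOn (fun t => dist (γ b) (γ t)) (Set.Icc b L) :=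
      (continuous_const.dist continuous_id).comp_continuousOn
        (hγ.mono (Set.Icc_subset_Icc hb.1 le_rfl))
    have hmem2 : D / 2 ∈ Set.Icc (dist (γ b) (γ b)) (dist (γ b) (γ L)) := by
      rw [dist_self]
      exact ⟨by linarith, hc⟩
    obtain ⟨t₂, ht₂mem, ht₂⟩ := intermediate_value_Icc hb.2 hgc hmem2
    simp only at ht₂
    have hbtw3 : dist (γ b) (γ t₂) + dist (γ t₂) (γ L) = d3 := str3 t₂ ht₂mem
    have hxle : dist (γ a) (γ t₂) ≤ D / 2 := by
      have h1 : dist (γ a) (γ t₂) ≤ dist (γ a) (γ 0) + dist (γ 0) (γ t₂) := dist_triangle _ _ _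
      have h2 : dist (γ a) (γ 0) = d1 := dist_comm _ _
      have h3 : dist (γ 0) (γ t₂) = dist (γ t₂) (γ L) := by rw [hclosed, dist_comm]
      have h4 : dist (γ t₂) (γ L) = d3 - D / 2 := by linarith [hbtw3, ht₂]
      linarith
    have hxge : D / 2 ≤ dist (γ a) (γ t₂) := by
      have h1 : dist (γ a) (γ b) ≤ dist (γ a) (γ t₂) + dist (γ t₂) (γ b) := dist_triangle _ _ _
      have h2 : dist (γ t₂) (γ b) = D / 2 := by rw [dist_comm]; exact ht₂
      rw [hdab] at h1
      linarith
    have hx2 : dist (γ a) (γ t₂) = D / 2 := le_antisymm hxle hxge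
    have hbtw₂ : dist (γ a) (γ t₂) + dist (γ t₂) (γ b) = dist (γ a) (γ b) := by
      rw [hdab, hx2, dist_comm (γ t₂) (γ b), ht₂]
      ring
    have heqm : γ t₁ = γ t₂ := my_seg_unique hbtw₁ hbtw₂ (by rw [ht₁, hx2])
    rcases lt_or_eq_of_le ht₂mem.2 with ht₂L | ht₂L
    · -- t₂ < L
      have := hinj ⟨ha.1.trans ht₁mem.1, lt_of_lt_of_le ht₁b hb.2⟩
        ⟨hb.1.trans ht₂mem.1, ht₂L⟩ heqm
      linarith [ht₂mem.1]
    · -- t₂ = L : then γ t₁ = γ 0, deduce 0 = t₁, contradiction with a < t₁, 0 ≤ a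
      have hd3half : d3 = D / 2 := by rw [hd3def, ← ht₂L]; exact ht₂
      have ha0 : 0 < a := by
        rcases lt_or_eq_of_le ha.1 with h | h
        · exact h
        · exfalso
          have : d1 = 0 := by rw [hd1def, ← h, dist_self]
          linarith
      have hγt₁0 : γ 0 = γ t₁ := by
        rw [hclosed, ← ht₂L, heqm]
      have := hinj ⟨le_rfl, hL⟩ ⟨ha.1.trans ht₁mem.1, lt_of_lt_of_le ht₁b hb.2⟩ hγt₁0
      linarith
  · -- point at distance D/2 from γ a lies on [0, a]
    have hd1half : D / 2 < d1 := by linarith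
    have hgc : ContinuousOn (fun t => dist (γ t) (γ a)) (Set.Icc 0 a) :=
      (continuous_id.dist continuous_const).comp_continuousOn
        (hγ.mono (Set.Icc_subset_Icc le_rfl ha.2))
    have hmem2 : D / 2 ∈ Set.Icc (dist (γ a) (γ a)) (dist (γ 0) (γ a)) := by
      rw [dist_self]
      exact ⟨by linarith, by linarith⟩
    obtain ⟨t₂, ht₂mem, ht₂⟩ := intermediate_value_Icc' ha.1 hgc hmem2
    simp only at ht₂
    have hbtw1 : dist (γ 0) (γ t₂) + dist (γ t₂) (γ a) = d1 := str1 t₂ ht₂mem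
    have hxle : dist (γ t₂) (γ b) ≤ D / 2 := by
      have h1 : dist (γ t₂) (γ b) ≤ dist (γ t₂) (γ 0) + dist (γ 0) (γ b) := dist_triangle _ _ _
      have h2 : dist (γ t₂) (γ 0) = d1 - D / 2 := by
        rw [dist_comm]; linarith [hbtw1, ht₂]
      have h3 : dist (γ 0) (γ b) = d3 := by rw [hclosed, dist_comm]
      linarith
    have hxge : D / 2 ≤ dist (γ t₂) (γ b) := by
      have h1 : dist (γ a) (γ b) ≤ dist (γ a) (γ t₂) + dist (γ t₂) (γ b) := dist_triangle _ _ _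
      have h2 : dist (γ a) (γ t₂) = D / 2 := by rw [dist_comm]; exact ht₂
      rw [hdab] at h1
      linarith
    have hx2 : dist (γ t₂) (γ b) = D / 2 := le_antisymm hxle hxge
    have hbtw₂ : dist (γ a) (γ t₂) + dist (γ t₂) (γ b) = dist (γ a) (γ b) := by
      rw [hdab, hx2, dist_comm (γ a) (γ t₂), ht₂]
      ring
    have heqm : γ t₁ = γ t₂ :=
      my_seg_unique hbtw₁ hbtw₂ (by rw [ht₁, dist_comm (γ a) (γ t₂), ht₂])
    have := hinj ⟨ha.1.trans ht₁mem.1, lt_of_lt_of_le ht₁b hb.2⟩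
      ⟨ht₂mem.1, lt_of_le_of_lt ht₂mem.2 (lt_of_lt_of_le haltb hb.2)⟩ heqm
    linarith [ht₂mem.2]
end

section
/- Let L > 0 and let C_L : ℝ → ℝ³ be the round circle of length L, C_L(s) = (L/(2π)) · (cos(2πs/L), sin(2πs/L), 0). Then for every p ∈ (-1, ∞) with p ≠ 0, (1/L²) ∫₀^L ∫₀^L ‖C_L(s) − C_L(t)‖^p ds dt = (L/π)^p · (1/π) ∫₀^π (sin θ)^p dθ. -/
open MeasureTheory Real

/-- The round circle of length `L` in `ℝ³`, parametrized by arc length. -/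
noncomputable def circleCurve (L : ℝ) (s : ℝ) : EuclideanSpace ℝ (Fin 3) :=
  (EuclideanSpace.equiv (Fin 3) ℝ).symm
    ![L / (2 * Real.pi) * Real.cos (2 * Real.pi * s / L),
      L / (2 * Real.pi) * Real.sin (2 * Real.pi * s / L), 0]

lemma chord (L : ℝ) (hL : 0 < L) (s t : ℝ) :
    ‖circleCurve L s - circleCurve L t‖
      = (L / Real.pi) * |Real.sin (Real.pi * (s - t) / L)| := by
  have hπ := Real.pi_pos
  set a := 2 * Real.pi * s / L
  set b := 2 * Real.pi * t / L
  set r := L / (2 * Real.pi)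
  have hnorm : ‖circleCurve L s - circleCurve L t‖
      = Real.sqrt ((r * Real.cos a - r * Real.cos b) ^ 2
          + ((r * Real.sin a - r * Real.sin b) ^ 2 + 0)) := by
    rw [EuclideanSpace.norm_eq]
    congr 1
    simp [circleCurve, Fin.sum_univ_three, sq_abs, a, b, r]
  rw [hnorm]
  have hhalf : Real.pi * (s - t) / L = (a - b) / 2 := by
    simp only [a, b]; field_simp
  have hsin : Real.sin ((a - b) / 2) ^ 2 = (1 - Real.cos (a - b)) / 2 := by
    have h := Real.cos_two_mul ((a - b) / 2)
    have h' := Real.sin_sq_add_cos_sq ((a - b) / 2)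
    have : 2 * ((a - b) / 2) = a - b := by ring
    rw [this] at h
    linarith
  have key : (r * Real.cos a - r * Real.cos b) ^ 2
      + ((r * Real.sin a - r * Real.sin b) ^ 2 + 0)
      = ((L / Real.pi) * Real.sin ((a - b) / 2)) ^ 2 := by
    have hcos := Real.cos_sub a b
    have h1 := Real.sin_sq_add_cos_sq a
    have h2 := Real.sin_sq_add_cos_sq b
    have hr : L / Real.pi = 2 * r := by simp only [r]; field_simp
    rw [hr]
    linear_combination (r^2)*h1 + (r^2)*h2 + 2*r^2*hcos - 4*r^2*hsin
  rw [key, Real.sqrt_sq_eq_abs, hhalf, abs_mul, abs_of_pos (by positivity : (0:ℝ) < L / Real.pi)]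

theorem circle_mean_chord_value
    (L : ℝ) (hL : 0 < L) (p : ℝ) (hp : -1 < p) (hp0 : p ≠ 0) :
    (1 / L ^ 2) *
        ∫ s in (0:ℝ)..L, ∫ t in (0:ℝ)..L, ‖circleCurve L s - circleCurve L t‖ ^ p
      = (L / Real.pi) ^ p *
          ((1 / Real.pi) * ∫ θ in (0:ℝ)..Real.pi, Real.sin θ ^ p) := by
  have hπ := Real.pi_pos
  have hLπ : (0:ℝ) ≤ L / Real.pi := by positivity
  set f : ℝ → ℝ := fun u => |Real.sin (Real.pi * u / L)| ^ p with hf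
  have hper : Function.Periodic f L := by
    intro u
    have : Real.pi * (u + L) / L = Real.pi * u / L + Real.pi := by
      field_simp
    simp [f, this, Real.sin_add_pi, abs_neg]
  -- the inner integral
  have hinner : ∀ s : ℝ, (∫ t in (0:ℝ)..L, ‖circleCurve L s - circleCurve L t‖ ^ p)
      = (L / Real.pi) ^ p * ((L / Real.pi) * ∫ θ in (0:ℝ)..Real.pi, Real.sin θ ^ p) := by
    intro s
    have h1 : (∫ t in (0:ℝ)..L, ‖circleCurve L s - circleCurve L t‖ ^ p)
        = (L / Real.pi) ^ p * ∫ t in (0:ℝ)..L, f (s - t) := by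
      rw [← intervalIntegral.integral_const_mul]
      congr 1 with t
      rw [chord L hL s t, Real.mul_rpow hLπ (abs_nonneg _)]
    have h2 : (∫ t in (0:ℝ)..L, f (s - t)) = ∫ u in (s - L)..(s - 0), f u :=
      intervalIntegral.integral_comp_sub_left (a := 0) (b := L) f s
    have h3 : (∫ u in (s - L)..(s - 0), f u) = ∫ u in (0:ℝ)..L, f u := by
      have h := hper.intervalIntegral_add_eq (s - L) 0
      rw [sub_add_cancel, zero_add] at h
      rw [sub_zero]
      exact h
    have h4 : (∫ u in (0:ℝ)..L, f u) = (L / Real.pi) * ∫ θ in (0:ℝ)..Real.pi, Real.sin θ ^ p := by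
      have hc : (Real.pi / L) ≠ 0 := by positivity
      have := intervalIntegral.integral_comp_mul_left (a := 0) (b := L)
        (fun θ => |Real.sin θ| ^ p) hc
      have heq : (∫ u in (0:ℝ)..L, f u)
          = ∫ u in (0:ℝ)..L, (fun θ => |Real.sin θ| ^ p) (Real.pi / L * u) := by
        congr 1 with u
        simp only [f]
        ring_nf
      rw [heq, this]
      have : Real.pi / L * L = Real.pi := by field_simp
      rw [this, mul_zero]
      have habs : (∫ θ in (0:ℝ)..Real.pi, |Real.sin θ| ^ p)
          = ∫ θ in (0:ℝ)..Real.pi, Real.sin θ ^ p := by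
        apply intervalIntegral.integral_congr
        intro θ hθ
        rw [Set.uIcc_of_le (le_of_lt hπ)] at hθ
        show |Real.sin θ| ^ p = Real.sin θ ^ p
        rw [abs_of_nonneg (Real.sin_nonneg_of_nonneg_of_le_pi hθ.1 hθ.2)]
      rw [smul_eq_mul, habs]
      congr 1
      rw [inv_div]
    rw [h1, h2, h3, h4]
  rw [intervalIntegral.integral_congr (g := fun _ =>
    (L / Real.pi) ^ p * ((L / Real.pi) * ∫ θ in (0:ℝ)..Real.pi, Real.sin θ ^ p))
    (fun s _ => hinner s)]
  rw [intervalIntegral.integral_const, smul_eq_mul]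
  have hL0 : L ≠ 0 := ne_of_gt hL
  have hπ0 : Real.pi ≠ 0 := ne_of_gt hπ
  field_simp
  ring
end

section
/- Let L > 0 and let C_L : ℝ → ℝ³ be the round circle of length L, C_L(s) = (L/(2π)) · (cos(2πs/L), sin(2πs/L), 0). Then (1/L²) ∫₀^L ∫₀^L log ‖C_L(s) − C_L(t)‖ ds dt = log(L/(2π)). -/
open MeasureTheory Real

/- ### Auxiliary integrability lemmas -/

lemma aux_integrableOn_neg_log_Ioc01 :
    IntegrableOn (fun x : ℝ => -Real.log x) (Set.Ioc (0:ℝ) 1) := by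
  apply intervalIntegral.integrableOn_deriv_of_nonneg
    (g := fun x : ℝ => x - x * Real.log x)
  · exact (continuous_id.sub Real.continuous_mul_log).continuousOn
  · intro x hx
    have h := (hasDerivAt_id x).sub (Real.hasDerivAt_mul_log (ne_of_gt hx.1))
    exact h.congr_deriv (by ring)
  · intro x hx
    have : Real.log x ≤ 0 := Real.log_nonpos hx.1.le hx.2.le
    linarith

lemma aux_integrableOn_neg_log (b : ℝ) (hb : 0 < b) :
    IntegrableOn (fun x : ℝ => -Real.log x) (Set.Ioc (0:ℝ) b) := by
  have h2 : IntegrableOn (fun x : ℝ => -Real.log x) (Set.Icc (1:ℝ) b) := by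
    apply ContinuousOn.integrableOn_Icc
    apply ContinuousOn.neg
    apply Real.continuousOn_log.mono
    intro x hx
    simp only [Set.mem_compl_iff, Set.mem_singleton_iff]
    intro h; rw [h] at hx; exact absurd hx.1 (by norm_num)
  have := aux_integrableOn_neg_log_Ioc01.union h2
  apply this.mono_set
  intro x hx
  rcases le_or_gt x 1 with h | h
  · exact Or.inl ⟨hx.1, h⟩
  · exact Or.inr ⟨h.le, hx.2⟩

lemma aux_intervalIntegrable_log_sin :
    IntervalIntegrable (fun x => Real.log (Real.sin x)) volume 0 (Real.pi/2) := by
  have hπ := Real.pi_pos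
  rw [intervalIntegrable_iff_integrableOn_Ioc_of_le (by positivity)]
  have hbound : IntegrableOn (fun x : ℝ => -Real.log x + Real.log (Real.pi/2))
      (Set.Ioc (0:ℝ) (Real.pi/2)) := by
    exact (aux_integrableOn_neg_log _ (by positivity)).add
      (integrableOn_const measure_Ioc_lt_top.ne)
  apply Integrable.mono' hbound
  · exact (Real.measurable_log.comp Real.measurable_sin).aestronglyMeasurable
  · filter_upwards [ae_restrict_mem measurableSet_Ioc] with x hx
    have hx0 : 0 < x := hx.1
    have hxle : x ≤ Real.pi/2 := hx.2
    have hs : 2/Real.pi * x ≤ Real.sin x := Real.mul_le_sin hx0.le hxle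
    have hspos : (0:ℝ) < 2/Real.pi * x := by positivity
    have hsin : 0 < Real.sin x := lt_of_lt_of_le hspos hs
    have h1 : Real.log (Real.sin x) ≤ 0 := Real.log_nonpos hsin.le (Real.sin_le_one x)
    rw [Real.norm_eq_abs, abs_of_nonpos h1]
    have h2 : Real.log (2/Real.pi * x) ≤ Real.log (Real.sin x) :=
      Real.log_le_log hspos hs
    have h3 : Real.log (2/Real.pi * x) = Real.log 2 - Real.log Real.pi + Real.log x := by
      rw [Real.log_mul (by positivity) hx0.ne', Real.log_div two_ne_zero Real.pi_ne_zero]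
    have h4 : Real.log (Real.pi/2) = Real.log Real.pi - Real.log 2 :=
      Real.log_div Real.pi_ne_zero two_ne_zero
    linarith

lemma aux_intervalIntegrable_log_cos :
    IntervalIntegrable (fun x => Real.log (Real.cos x)) volume 0 (Real.pi/2) := by
  have h := aux_intervalIntegrable_log_sin.comp_sub_left (Real.pi/2)
  have he : (fun x => Real.log (Real.sin (Real.pi/2 - x)))
      = fun x => Real.log (Real.cos x) := by
    funext x; rw [Real.sin_pi_div_two_sub]
  rw [he] at h
  simpa using h.symm

lemma aux_intervalIntegrable_log_sin' :
    IntervalIntegrable (fun x => Real.log (Real.sin x)) volume (Real.pi/2) Real.pi := by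
  have h := aux_intervalIntegrable_log_sin.comp_sub_left Real.pi
  have he : (fun x => Real.log (Real.sin (Real.pi - x)))
      = fun x => Real.log (Real.sin x) := by
    funext x; rw [Real.sin_pi_sub]
  rw [he] at h
  have h1 : Real.pi - 0 = Real.pi := by ring
  have h2 : Real.pi - Real.pi/2 = Real.pi/2 := by ring
  rw [h1, h2] at h
  exact h.symm

/- ### The classical integral ∫₀^π log sin = -π log 2 -/

lemma aux_integral_log_sin_pi :
    ∫ x in (0:ℝ)..Real.pi, Real.log (Real.sin x) = -Real.pi * Real.log 2 := by
  have hπ := Real.pi_pos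
  set J := ∫ x in (0:ℝ)..(Real.pi/2), Real.log (Real.sin x) with hJ
  have hs := aux_intervalIntegrable_log_sin
  have hcos_int := aux_intervalIntegrable_log_cos
  -- ∫ log cos = J
  have hcos_eq : ∫ x in (0:ℝ)..(Real.pi/2), Real.log (Real.cos x) = J := by
    have hcgr : ∀ x ∈ Set.uIcc (0:ℝ) (Real.pi/2),
        Real.log (Real.cos x) = (fun y => Real.log (Real.sin y)) (Real.pi/2 - x) := by
      intro x _; simp [Real.sin_pi_div_two_sub]
    rw [intervalIntegral.integral_congr hcgr,
      intervalIntegral.integral_comp_sub_left (fun y => Real.log (Real.sin y)) (Real.pi/2)]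
    norm_num
    exact hJ.symm
  -- second half
  have hsecond : ∫ x in (Real.pi/2)..Real.pi, Real.log (Real.sin x) = J := by
    have hcgr : ∀ x ∈ Set.uIcc (Real.pi/2) Real.pi,
        Real.log (Real.sin x) = (fun y => Real.log (Real.sin y)) (Real.pi - x) := by
      intro x _; simp [Real.sin_pi_sub]
    rw [intervalIntegral.integral_congr hcgr,
      intervalIntegral.integral_comp_sub_left (fun y => Real.log (Real.sin y)) Real.pi]
    have h1 : Real.pi - Real.pi = 0 := by ring
    have h2 : Real.pi - Real.pi/2 = Real.pi/2 := by ring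
    rw [h1, h2]
  have hI : ∫ x in (0:ℝ)..Real.pi, Real.log (Real.sin x) = 2 * J := by
    rw [← intervalIntegral.integral_add_adjacent_intervals hs aux_intervalIntegrable_log_sin',
      hsecond, ← hJ]
    ring
  -- duplication
  have hdup : ∫ x in (0:ℝ)..(Real.pi/2), Real.log (Real.sin (2*x)) = J := by
    rw [intervalIntegral.integral_comp_mul_left (fun y => Real.log (Real.sin y)) two_ne_zero]
    have h1 : (2:ℝ) * 0 = 0 := by ring
    have h2 : (2:ℝ) * (Real.pi/2) = Real.pi := by ring
    rw [h1, h2, hI, smul_eq_mul]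
    ring
  have hsplit : ∫ x in (0:ℝ)..(Real.pi/2), Real.log (Real.sin (2*x))
      = ∫ x in (0:ℝ)..(Real.pi/2),
          (Real.log 2 + (Real.log (Real.sin x) + Real.log (Real.cos x))) := by
    apply intervalIntegral.integral_congr_ae
    have h0 : ∀ᵐ x : ℝ, x ≠ Real.pi/2 := by
      rw [ae_iff]
      have : {x : ℝ | ¬ x ≠ Real.pi/2} = {Real.pi/2} := by
        ext x; simp
      rw [this]
      exact measure_singleton _
    filter_upwards [h0] with x hx hmem
    rw [Set.uIoc_of_le (by positivity)] at hmem
    have hx0 : 0 < x := hmem.1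
    have hxlt : x < Real.pi/2 := lt_of_le_of_ne hmem.2 hx
    have hsin : 0 < Real.sin x := Real.sin_pos_of_pos_of_lt_pi hx0 (by linarith)
    have hcos : 0 < Real.cos x := Real.cos_pos_of_mem_Ioo ⟨by linarith, hxlt⟩
    rw [Real.sin_two_mul, Real.log_mul (by positivity) hcos.ne',
      Real.log_mul two_ne_zero hsin.ne']
    ring
  have hadd : ∫ x in (0:ℝ)..(Real.pi/2),
      (Real.log 2 + (Real.log (Real.sin x) + Real.log (Real.cos x)))
      = (Real.pi/2) * Real.log 2 + (J + J) := by
    rw [intervalIntegral.integral_add intervalIntegrable_const (hs.add hcos_int),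
      intervalIntegral.integral_add hs hcos_int, hcos_eq, intervalIntegral.integral_const,
      ← hJ, smul_eq_mul]
    ring
  have hJval : J = -(Real.pi/2) * Real.log 2 := by
    have := hdup.symm.trans (hsplit.trans hadd)
    linarith
  rw [hI, hJval]
  ring

/- ### log |sin| -/

lemma aux_intervalIntegrable_log_abs_sin :
    IntervalIntegrable (fun x => Real.log |Real.sin x|) volume 0 Real.pi := by
  have hπ := Real.pi_pos
  have h := aux_intervalIntegrable_log_sin.trans aux_intervalIntegrable_log_sin'
  rw [intervalIntegrable_iff_integrableOn_Ioc_of_le hπ.le] at h ⊢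
  apply h.congr_fun _ measurableSet_Ioc
  intro x hx
  show Real.log (Real.sin x) = Real.log |Real.sin x|
  rw [abs_of_nonneg (Real.sin_nonneg_of_nonneg_of_le_pi hx.1.le hx.2)]

lemma aux_integral_log_abs_sin :
    ∫ x in (0:ℝ)..Real.pi, Real.log |Real.sin x| = -Real.pi * Real.log 2 := by
  rw [← aux_integral_log_sin_pi]
  apply intervalIntegral.integral_congr
  intro x hx
  rw [Set.uIcc_of_le Real.pi_pos.le] at hx
  show Real.log |Real.sin x| = Real.log (Real.sin x)
  rw [abs_of_nonneg (Real.sin_nonneg_of_nonneg_of_le_pi hx.1 hx.2)]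

/- ### Chord length of the circle -/

lemma aux_circle_norm (L : ℝ) (hL : 0 < L) (s t : ℝ) :
    ‖circleCurve L s - circleCurve L t‖
      = L / Real.pi * |Real.sin (Real.pi * (s - t) / L)| := by
  have hπ := Real.pi_pos
  set A := 2 * Real.pi * s / L with hA
  set B := 2 * Real.pi * t / L with hB
  set θ := Real.pi * (s - t) / L with hθ
  have hab : A - B = 2 * θ := by
    rw [hA, hB, hθ]; field_simp
  have hcomp : ∀ i, (circleCurve L s - circleCurve L t) i
      = ![L / (2 * Real.pi) * (Real.cos A - Real.cos B),
          L / (2 * Real.pi) * (Real.sin A - Real.sin B), 0] i := by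
    intro i
    fin_cases i <;>
      simp [circleCurve, EuclideanSpace.equiv, ← hA, ← hB] <;> ring
  rw [EuclideanSpace.norm_eq]
  simp only [hcomp]
  rw [Fin.sum_univ_three]
  simp only [Matrix.cons_val_zero, Matrix.cons_val_one, Matrix.head_cons,
    Matrix.cons_val_two, Matrix.tail_cons, Real.norm_eq_abs, sq_abs]
  have e1 : (Real.cos A - Real.cos B)^2 + (Real.sin A - Real.sin B)^2
      = 2 - 2 * Real.cos (A - B) := by
    have h1 := Real.sin_sq_add_cos_sq A
    have h2 := Real.sin_sq_add_cos_sq B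
    rw [Real.cos_sub]
    nlinarith [h1, h2]
  have e2 : Real.cos (A - B) = 1 - 2 * Real.sin θ ^ 2 := by
    rw [hab, Real.cos_two_mul]
    have := Real.sin_sq_add_cos_sq θ
    nlinarith [this]
  have key : (L / (2 * Real.pi) * (Real.cos A - Real.cos B))^2
      + (L / (2 * Real.pi) * (Real.sin A - Real.sin B))^2 + 0^2
      = (L / Real.pi * |Real.sin θ|)^2 := by
    have hq : (L / Real.pi * |Real.sin θ|)^2 = (L / Real.pi)^2 * Real.sin θ ^ 2 := by
      rw [mul_pow, sq_abs]
    rw [hq]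
    have expand : (L / (2 * Real.pi) * (Real.cos A - Real.cos B))^2
        + (L / (2 * Real.pi) * (Real.sin A - Real.sin B))^2 + 0^2
        = (L / (2 * Real.pi))^2 * ((Real.cos A - Real.cos B)^2 + (Real.sin A - Real.sin B)^2) := by
      ring
    rw [expand, e1, e2]
    field_simp
    ring
  rw [key, Real.sqrt_sq (by positivity)]

/- ### Main theorem -/

theorem circle_log_mean_chord_value (L : ℝ) (hL : 0 < L) :
    (1 / L ^ 2) *
        ∫ s in (0:ℝ)..L, ∫ t in (0:ℝ)..L, Real.log ‖circleCurve L s - circleCurve L t‖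
      = Real.log (L / (2 * Real.pi)) := by
  have hπ := Real.pi_pos
  set G : ℝ → ℝ := fun u => Real.log (L / Real.pi * |Real.sin (Real.pi * u / L)|) with hG
  have hGper : Function.Periodic G L := by
    intro u
    have harg : Real.pi * (u + L) / L = Real.pi * u / L + Real.pi := by
      field_simp
    simp only [hG, harg, Real.sin_add_pi, abs_neg]
  -- integrability of s ↦ log |sin (π s / L)| on [0, L]
  have hGcomp_int : IntervalIntegrable (fun x => Real.log |Real.sin (Real.pi * x / L)|)
      volume 0 L := by
    have h := aux_intervalIntegrable_log_abs_sin.comp_mul_left (c := Real.pi / L)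
    have he : (fun x => Real.log |Real.sin (Real.pi / L * x)|)
        = fun x => Real.log |Real.sin (Real.pi * x / L)| := by
      funext x; rw [show Real.pi / L * x = Real.pi * x / L by ring]
    have h1 : (0:ℝ) / (Real.pi / L) = 0 := by simp
    have h2 : Real.pi / (Real.pi / L) = L := by field_simp
    rw [he, h1, h2] at h
    exact h
  -- value of ∫₀^L G
  have hGval : ∫ u in (0:ℝ)..L, G u = L * Real.log (L / (2 * Real.pi)) := by
    have hcongr : ∫ u in (0:ℝ)..L, G u
        = ∫ u in (0:ℝ)..L, (Real.log (L / Real.pi) + Real.log |Real.sin (Real.pi * u / L)|) := by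
      apply intervalIntegral.integral_congr_ae
      have hzero : ∀ᵐ u : ℝ, Real.sin (Real.pi * u / L) ≠ 0 := by
        rw [ae_iff]
        refine measure_mono_null (t := Set.range fun n : ℤ => (n : ℝ) * L) ?_
          (Set.Countable.measure_zero (Set.countable_range _) _)
        · intro u hu
          simp only [Set.mem_setOf_eq, not_not] at hu
          rw [Real.sin_eq_zero_iff] at hu
          obtain ⟨n, hn⟩ := hu
          refine ⟨n, ?_⟩
          have : (n : ℝ) * Real.pi * L = Real.pi * u := by
            field_simp at hn
            rw [← hn]; ring
          field_simp at this ⊢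
          nlinarith [this]
      filter_upwards [hzero] with u hu _
      simp only [hG]
      rw [Real.log_mul (by positivity) (abs_ne_zero.2 hu)]
    rw [hcongr, intervalIntegral.integral_add intervalIntegrable_const hGcomp_int,
      intervalIntegral.integral_const]
    have hsecond : ∫ u in (0:ℝ)..L, Real.log |Real.sin (Real.pi * u / L)|
        = -L * Real.log 2 := by
      have he : (fun x => Real.log |Real.sin (Real.pi / L * x)|)
          = fun x => Real.log |Real.sin (Real.pi * x / L)| := by
        funext x; rw [show Real.pi / L * x = Real.pi * x / L by ring]
      have h := intervalIntegral.integral_comp_mul_left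
        (fun y => Real.log |Real.sin y|) (c := Real.pi / L) (by positivity)
        (a := 0) (b := L)
      rw [he] at h
      rw [h]
      have h1 : Real.pi / L * 0 = 0 := by ring
      have h2 : Real.pi / L * L = Real.pi := by field_simp
      rw [h1, h2, aux_integral_log_abs_sin, smul_eq_mul]
      field_simp
    rw [hsecond, smul_eq_mul]
    have hlog1 : Real.log (L / Real.pi) = Real.log L - Real.log Real.pi :=
      Real.log_div hL.ne' Real.pi_ne_zero
    have hlog2 : Real.log (L / (2 * Real.pi)) = Real.log L - (Real.log 2 + Real.log Real.pi) := by
      rw [Real.log_div hL.ne' (by positivity), Real.log_mul two_ne_zero Real.pi_ne_zero]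
    rw [hlog1, hlog2]
    ring
  -- inner integral
  have hinner : ∀ s : ℝ, ∫ t in (0:ℝ)..L, Real.log ‖circleCurve L s - circleCurve L t‖
      = L * Real.log (L / (2 * Real.pi)) := by
    intro s
    have h1 : ∫ t in (0:ℝ)..L, Real.log ‖circleCurve L s - circleCurve L t‖
        = ∫ t in (0:ℝ)..L, G (s - t) := by
      apply intervalIntegral.integral_congr
      intro t _
      show Real.log ‖circleCurve L s - circleCurve L t‖ = G (s - t)
      simp only [hG]
      rw [aux_circle_norm L hL s t]
    rw [h1, intervalIntegral.integral_comp_sub_left G s]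
    have h2 : s - 0 = (s - L) + L := by ring
    rw [h2, hGper.intervalIntegral_add_eq (s - L) 0, zero_add, hGval]
  rw [intervalIntegral.integral_congr (fun s _ => hinner s),
    intervalIntegral.integral_const, smul_eq_mul, sub_zero]
  field_simp
end

section
/- Let L > 0 and let γ : ℝ → ℝ³ be continuously differentiable and L-periodic (γ(s + L) = γ(s) for all s) with ‖γ'(s)‖ = 1 for all s. Let c := (1/L) ∫₀^L γ(s) ds. Then ∫₀^L ‖γ(s) − c‖² ds ≤ L³/(4π²); equivalently, the radius of gyration satisfies R_g(γ) ≤ L/(2π). -/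
open MeasureTheory Real AddCircle

lemma parseval_cont {L : ℝ} [hL : Fact (0 < L)] (f : ℝ → ℂ) (hf : Continuous f)
    (hper : ∀ s, f (s + L) = f s) :
    Summable (fun n : ℤ => ‖fourierCoeff (liftIco L 0 f) n‖ ^ 2) ∧
    L * ∑' n : ℤ, ‖fourierCoeff (liftIco L 0 f) n‖ ^ 2 = ∫ s in (0:ℝ)..L, ‖f s‖ ^ 2 := by
  have hfa : f 0 = f (0 + L) := by rw [zero_add, ← hper 0, zero_add]
  have hcont : Continuous (liftIco L 0 f) :=
    liftIco_continuous hfa hf.continuousOn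
  set Fc : C(AddCircle L, ℂ) := ⟨liftIco L 0 f, hcont⟩ with hFc
  set g := ContinuousMap.toLp 2 haarAddCircle ℂ Fc with hg
  have hcoeff : ∀ n, fourierCoeff (liftIco L 0 f) n = fourierCoeff (g : AddCircle L → ℂ) n := by
    intro n; rw [fourierCoeff_toLp]; rfl
  constructor
  · have h1 : Memℓp (fun n => fourierBasis.repr g n) 2 := lp.memℓp _
    have h2 := (memℓp_gen_iff (p := 2) (by norm_num)).mp h1
    have h3 : Summable (fun n : ℤ => ‖fourierBasis.repr g n‖ ^ 2) := by
      convert h2 using 2 with n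
      rw [ENNReal.toReal_ofNat, ← Real.rpow_natCast]
      norm_num
    convert h3 using 2 with n
    rw [hcoeff n, ← fourierBasis_repr]
  · have hPar := tsum_sq_fourierCoeff g
    simp_rw [hcoeff]
    rw [hPar]
    have h4 : ∫ t : AddCircle L, ‖g t‖ ^ 2 ∂haarAddCircle
        = ∫ t : AddCircle L, ‖liftIco L 0 f t‖ ^ 2 ∂haarAddCircle := by
      apply integral_congr_ae
      filter_upwards [ContinuousMap.coeFn_toLp (p := 2) (𝕜 := ℂ) haarAddCircle Fc] with t ht
      rw [ht]; rfl
    rw [h4]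
    have h5 : ∫ s in (0:ℝ)..(0 + L), ‖liftIco L 0 f s‖ ^ 2
        = ∫ t : AddCircle L, ‖liftIco L 0 f t‖ ^ 2 ∂volume := by
      exact AddCircle.intervalIntegral_preimage L 0 (fun t => ‖liftIco L 0 f t‖ ^ 2)
    have h6 : (volume : Measure (AddCircle L)) = ENNReal.ofReal L • haarAddCircle :=
      volume_eq_smul_haarAddCircle
    rw [h6, integral_smul_measure, ENNReal.toReal_ofReal hL.out.le] at h5
    rw [← smul_eq_mul, ← h5]
    rw [zero_add]
    apply intervalIntegral.integral_congr_ae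
    have hae : ∀ᵐ (x:ℝ), x ∉ ({L}: Set ℝ) := by
      rw [MeasureTheory.ae_iff]; simp
    filter_upwards [hae] with x hxL hx
    rw [Set.uIoc_of_le hL.out.le] at hx
    rw [liftIco_coe_apply]
    rw [zero_add]
    exact ⟨hx.1.le, lt_of_le_of_ne hx.2 (by simpa using hxL)⟩
open MeasureTheory Real AddCircle

lemma wirtinger {L : ℝ} (hL : 0 < L) (f : ℝ → ℂ) (hf : ContDiff ℝ 1 f)
    (hper : ∀ s, f (s + L) = f s) (hmean : ∫ s in (0:ℝ)..L, f s = 0) :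
    ∫ s in (0:ℝ)..L, ‖f s‖ ^ 2 ≤ L ^ 2 / (4 * π ^ 2) * ∫ s in (0:ℝ)..L, ‖deriv f s‖ ^ 2 := by
  haveI : Fact (0 < L) := ⟨hL⟩
  have hπ : (0:ℝ) < π := Real.pi_pos
  have hfc : Continuous f := hf.continuous
  have hder : Continuous (deriv f) := hf.continuous_deriv le_rfl
  have hperd : ∀ s, deriv f (s + L) = deriv f s := by
    intro s
    have : (fun x => f (x + L)) = f := funext hper
    calc deriv f (s + L) = deriv (fun x => f (x + L)) s := (deriv_comp_add_const f L s).symm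
    _ = deriv f s := by rw [this]
  -- coefficient relation
  set a : ℤ → ℂ := fun n => fourierCoeff (liftIco L 0 f) n with ha
  set b : ℤ → ℂ := fun n => fourierCoeff (liftIco L 0 (deriv f)) n with hb
  have ha0 : a 0 = 0 := by
    rw [ha]
    simp only [fourierCoeff_liftIco_eq, fourierCoeffOn_eq_integral]
    simp only [neg_zero, fourier_zero, one_smul, zero_add]
    rw [hmean, smul_zero]
  have hrel : ∀ n : ℤ, n ≠ 0 → ‖a n‖ ≤ L / (2 * π) * ‖b n‖ := by
    intro n hn
    have key := fourierCoeffOn_of_hasDerivAt (lt_add_of_pos_right 0 Fact.out) hn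
      (f' := deriv f) (fun x _ => (hf.differentiable one_ne_zero x).hasDerivAt)
      (hder.intervalIntegrable 0 (0 + L))
    rw [hper 0, sub_self, mul_zero, zero_sub] at key
    have hAn : a n = 1 / (-2 * ↑π * Complex.I * ↑n) *
        -((↑(0 + L) - ↑(0:ℝ)) * b n) := by
      rw [ha, hb]
      simp only [fourierCoeff_liftIco_eq]
      exact key
    rw [hAn]
    rw [norm_mul, norm_neg, norm_mul]
    have h1 : ‖(1:ℂ) / (-2 * ↑π * Complex.I * ↑n)‖ = 1 / (2 * π * |(n:ℝ)|) := by
      rw [norm_div, norm_one]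
      simp [abs_of_pos hπ, abs_of_nonneg, mul_comm]
    have h2 : ‖((((0:ℝ) + L : ℝ)) : ℂ) - ((0:ℝ):ℂ)‖ = L := by
      simp [Complex.norm_real, abs_of_pos hL]
    rw [h1, h2]
    have hn1 : (1:ℝ) ≤ |(n:ℝ)| := by exact_mod_cast Int.one_le_abs hn
    have h3 : 1 / (2 * π * |(n:ℝ)|) ≤ 1 / (2 * π) := by
      apply one_div_le_one_div_of_le (by positivity)
      nlinarith
    calc 1 / (2 * π * |(n:ℝ)|) * (L * ‖b n‖) ≤ 1 / (2 * π) * (L * ‖b n‖) :=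
          mul_le_mul_of_nonneg_right h3 (by positivity)
      _ = L / (2 * π) * ‖b n‖ := by ring
  obtain ⟨hsA, hA⟩ := parseval_cont f hfc hper
  obtain ⟨hsB, hB⟩ := parseval_cont (deriv f) hder hperd
  have hsq : ∀ n : ℤ, ‖a n‖ ^ 2 ≤ (L / (2 * π)) ^ 2 * ‖b n‖ ^ 2 := by
    intro n
    rcases eq_or_ne n 0 with h | h
    · rw [h, ha0, norm_zero]
      norm_num
      positivity
    · rw [← mul_pow]
      exact pow_le_pow_left₀ (norm_nonneg _) (hrel n h) 2
  have htsum : ∑' n : ℤ, ‖a n‖ ^ 2 ≤ (L / (2 * π)) ^ 2 * ∑' n : ℤ, ‖b n‖ ^ 2 := by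
    rw [← tsum_mul_left]
    exact Summable.tsum_le_tsum hsq hsA (hsB.mul_left _)
  calc ∫ s in (0:ℝ)..L, ‖f s‖ ^ 2 = L * ∑' n : ℤ, ‖a n‖ ^ 2 := hA.symm
    _ ≤ L * ((L / (2 * π)) ^ 2 * ∑' n : ℤ, ‖b n‖ ^ 2) :=
        mul_le_mul_of_nonneg_left htsum hL.le
    _ = L ^ 2 / (4 * π ^ 2) * (L * ∑' n : ℤ, ‖b n‖ ^ 2) := by
        field_simp
        ring
    _ = L ^ 2 / (4 * π ^ 2) * ∫ s in (0:ℝ)..L, ‖deriv f s‖ ^ 2 := by rw [hB]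


theorem gyration_radius_bound
    (L : ℝ) (hL : 0 < L) (γ : ℝ → EuclideanSpace ℝ (Fin 3))
    (hC1 : ContDiff ℝ 1 γ)
    (hper : ∀ s, γ (s + L) = γ s)
    (hunit : ∀ s, ‖deriv γ s‖ = 1) :
    ∫ s in (0:ℝ)..L, ‖γ s - (1 / L) • (∫ u in (0:ℝ)..L, γ u)‖ ^ 2
      ≤ L ^ 3 / (4 * Real.pi ^ 2) := by
  haveI : Fact (0 < L) := ⟨hL⟩
  have hπ : (0:ℝ) < π := Real.pi_pos
  set c : EuclideanSpace ℝ (Fin 3) := (1 / L) • (∫ u in (0:ℝ)..L, γ u) with hc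
  have hγc : Continuous γ := hC1.continuous
  have hγd : Continuous (deriv γ) := hC1.continuous_deriv le_rfl
  set f : Fin 3 → ℝ → ℂ := fun i s => ((γ s i - c i : ℝ) : ℂ) with hfdef
  have hf : ∀ i, ContDiff ℝ 1 (f i) := by
    intro i
    exact Complex.ofRealCLM.contDiff.comp
      (((EuclideanSpace.proj i).contDiff.comp hC1).sub contDiff_const)
  have hdf : ∀ i s, HasDerivAt (f i) ((deriv γ s i : ℝ) : ℂ) s := by
    intro i s
    have h1 : HasDerivAt γ (deriv γ s) s := (hC1.differentiable one_ne_zero s).hasDerivAt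
    have h2 := ((EuclideanSpace.proj (𝕜 := ℝ) i).hasFDerivAt.comp_hasDerivAt s h1).sub_const (c i)
    exact Complex.ofRealCLM.hasFDerivAt.comp_hasDerivAt s h2
  have hderiv : ∀ i s, deriv (f i) s = ((deriv γ s i : ℝ) : ℂ) := fun i s => (hdf i s).deriv
  have hfper : ∀ i s, f i (s + L) = f i s := by intro i s; simp only [hfdef, hper s]
  have hcoordc : ∀ i, Continuous (fun s => γ s i) := fun i =>
    (EuclideanSpace.proj (𝕜 := ℝ) i).continuous.comp hγc
  have hfmean : ∀ i, ∫ s in (0:ℝ)..L, f i s = 0 := by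
    intro i
    rw [hfdef]
    simp only
    rw [intervalIntegral.integral_ofReal]
    have h1 : ∫ s in (0:ℝ)..L, (γ s i - c i) = (∫ u in (0:ℝ)..L, γ u) i - L * c i := by
      rw [intervalIntegral.integral_sub ((hcoordc i).intervalIntegrable 0 L)
        intervalIntegrable_const]
      rw [intervalIntegral.integral_const]
      congr 1
      · exact (EuclideanSpace.proj (𝕜 := ℝ) i).intervalIntegral_comp_comm
          (hγc.intervalIntegrable 0 L)
      · rw [sub_zero]; simp [smul_eq_mul]
    rw [h1]
    have hci : c i = (1 / L) * (∫ u in (0:ℝ)..L, γ u) i := by rw [hc]; simp [smul_eq_mul]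
    rw [hci]
    have : L * (1 / L * (∫ u in (0:ℝ)..L, γ u) i) = (∫ u in (0:ℝ)..L, γ u) i := by
      field_simp
    rw [this, sub_self, Complex.ofReal_zero]
  have hnorm : ∀ s, ‖γ s - c‖ ^ 2 = ∑ i, ‖f i s‖ ^ 2 := by
    intro s
    rw [EuclideanSpace.norm_eq, Real.sq_sqrt (by positivity)]
    congr 1
    ext i
    simp [hfdef, Complex.norm_real]
    rw [← Complex.ofReal_sub, Complex.norm_real, Real.norm_eq_abs, sq_abs]
  have hnormd : ∀ s, ‖deriv γ s‖ ^ 2 = ∑ i, ‖deriv (f i) s‖ ^ 2 := by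
    intro s
    rw [EuclideanSpace.norm_eq, Real.sq_sqrt (by positivity)]
    congr 1
    ext i
    rw [hderiv]
    simp [Complex.norm_real]
  have hfi_int : ∀ i, IntervalIntegrable (fun s => ‖f i s‖ ^ 2) volume 0 L := fun i =>
    (((hf i).continuous.norm).pow 2).intervalIntegrable 0 L
  have hdfi_int : ∀ i, IntervalIntegrable (fun s => ‖deriv (f i) s‖ ^ 2) volume 0 L := fun i =>
    ((((hf i).continuous_deriv le_rfl).norm).pow 2).intervalIntegrable 0 L
  calc ∫ s in (0:ℝ)..L, ‖γ s - c‖ ^ 2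
      = ∫ s in (0:ℝ)..L, ∑ i, ‖f i s‖ ^ 2 :=
        intervalIntegral.integral_congr (fun s _ => hnorm s)
    _ = ∑ i, ∫ s in (0:ℝ)..L, ‖f i s‖ ^ 2 :=
        intervalIntegral.integral_finset_sum (fun i _ => hfi_int i)
    _ ≤ ∑ i, L ^ 2 / (4 * π ^ 2) * ∫ s in (0:ℝ)..L, ‖deriv (f i) s‖ ^ 2 :=
        Finset.sum_le_sum (fun i _ => wirtinger hL (f i) (hf i) (hfper i) (hfmean i))
    _ = L ^ 2 / (4 * π ^ 2) * ∑ i, ∫ s in (0:ℝ)..L, ‖deriv (f i) s‖ ^ 2 := by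
        rw [Finset.mul_sum]
    _ = L ^ 2 / (4 * π ^ 2) * ∫ s in (0:ℝ)..L, ∑ i, ‖deriv (f i) s‖ ^ 2 := by
        rw [intervalIntegral.integral_finset_sum (fun i _ => hdfi_int i)]
    _ = L ^ 2 / (4 * π ^ 2) * ∫ s in (0:ℝ)..L, (1:ℝ) := by
        congr 1
        apply intervalIntegral.integral_congr
        intro s _
        simp only
        rw [← hnormd s, hunit s, one_pow]
    _ = L ^ 3 / (4 * π ^ 2) := by
        simp only [intervalIntegral.integral_const, smul_eq_mul, sub_zero, mul_one]
        ring
end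

section
/- Let L > 0 and let γ : ℝ → ℝ³ be continuously differentiable and L-periodic (γ(s + L) = γ(s) for all s) with ‖γ'(s)‖ = 1 for all s. Then ∫₀^L ∫₀^L ‖γ(s) − γ(t)‖² ds dt ≤ L⁴/(2π²). Equivalently, with D₂(γ) = ((1/L²) ∫₀^L ∫₀^L ‖γ(s) − γ(t)‖² ds dt)^{1/2}, every such closed curve satisfies L / D₂(γ) ≥ √2 · π, with equality for the round circle. -/
open MeasureTheory Real Complex intervalIntegral
open scoped ENNReal

lemma periodic_deriv'' {f f' : ℝ → ℂ} {L : ℝ}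
    (hd : ∀ x, HasDerivAt f (f' x) x) (hper : Function.Periodic f L) :
    Function.Periodic f' L := by
  intro s
  have h1 : HasDerivAt (fun y : ℝ => f (y + L)) (f' (s + L)) s :=
    HasDerivAt.comp_add_const s L (hd (s + L))
  have h3 : (fun y : ℝ => f (y + L)) = f := funext fun x => hper x
  rw [h3] at h1
  exact h1.unique (hd s)

lemma fourierCoeff_lift_eq' {L : ℝ} [hL : Fact (0 < L)] {g : ℝ → ℂ} (hg : Function.Periodic g L)
    (n : ℤ) :
    fourierCoeff hg.lift n = fourierCoeffOn hL.out g n := by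
  rw [fourierCoeff_eq_intervalIntegral _ n 0, fourierCoeffOn_eq_integral _ n hL.out, zero_add]
  simp only [fourier_coe_apply, Function.Periodic.lift_coe, sub_zero]

lemma parseval_cont_s6 {L : ℝ} [hL : Fact (0 < L)] (G : C(AddCircle L, ℂ)) :
    HasSum (fun n => ‖fourierCoeff ⇑G n‖ ^ 2)
      (∫ t : AddCircle L, ‖G t‖ ^ 2 ∂AddCircle.haarAddCircle) := by
  set q : Lp ℂ 2 (@AddCircle.haarAddCircle L hL) :=
    ContinuousMap.toLp (E := ℂ) 2 AddCircle.haarAddCircle ℂ G with hq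
  have hcoeff : ∀ n : ℤ, fourierCoeff (⇑q) n = fourierCoeff (⇑G) n := fun n =>
    fourierCoeff_toLp G n
  have h1 := tsum_sq_fourierCoeff q
  have hs : Summable fun n : ℤ => ‖fourierCoeff (⇑q) n‖ ^ 2 := by
    have hm := lp.memℓp (fourierBasis.repr q)
    have h := hm.summable (by norm_num)
    have he : ((2 : ℝ≥0∞)).toReal = ((2 : ℕ) : ℝ) := by norm_num
    simp only [he, Real.rpow_natCast, fourierBasis_repr] at h
    exact h
  have h2 : (∫ t : AddCircle L, ‖q t‖ ^ 2 ∂AddCircle.haarAddCircle)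
      = ∫ t : AddCircle L, ‖G t‖ ^ 2 ∂AddCircle.haarAddCircle := by
    apply MeasureTheory.integral_congr_ae
    filter_upwards [ContinuousMap.coeFn_toLp (p := 2) (𝕜 := ℂ) AddCircle.haarAddCircle G] with t ht
    rw [hq, ht]
  simp only [hcoeff] at h1 hs
  rw [← h2, ← h1]
  exact hs.hasSum

lemma haar_integral_norm_sq {L : ℝ} [hL : Fact (0 < L)] {g : ℝ → ℂ} (hg : Function.Periodic g L) :
    ∫ x in (0:ℝ)..L, ‖g x‖ ^ 2
      = L * ∫ t : AddCircle L, ‖Function.Periodic.lift hg t‖ ^ 2 ∂AddCircle.haarAddCircle := by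
  have h := AddCircle.intervalIntegral_preimage L 0 (fun t : AddCircle L => ‖hg.lift t‖ ^ 2)
  rw [zero_add] at h
  have h2 : (∫ x in (0:ℝ)..L, ‖hg.lift (x : AddCircle L)‖ ^ 2) = ∫ x in (0:ℝ)..L, ‖g x‖ ^ 2 :=
    intervalIntegral.integral_congr fun x _ => by rw [Function.Periodic.lift_coe]
  rw [← h2, h, AddCircle.volume_eq_smul_haarAddCircle, MeasureTheory.integral_smul_measure,
    ENNReal.toReal_ofReal hL.out.le, smul_eq_mul]

lemma wirtinger_complex (L : ℝ) (hL : 0 < L) (f f' : ℝ → ℂ)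
    (hd : ∀ x, HasDerivAt f (f' x) x) (hc' : Continuous f')
    (hper : Function.Periodic f L)
    (hmean : ∫ s in (0:ℝ)..L, f s = 0) :
    ∫ s in (0:ℝ)..L, ‖f s‖ ^ 2 ≤ L ^ 2 / (4 * π ^ 2) * ∫ s in (0:ℝ)..L, ‖f' s‖ ^ 2 := by
  haveI : Fact (0 < L) := ⟨hL⟩
  have hc : Continuous f := continuous_iff_continuousAt.mpr fun x => (hd x).continuousAt
  have hper' : Function.Periodic f' L := periodic_deriv'' hd hper
  set F : C(AddCircle L, ℂ) := ⟨hper.lift, continuous_coinduced_dom.mpr hc⟩ with hF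
  set F' : C(AddCircle L, ℂ) := ⟨hper'.lift, continuous_coinduced_dom.mpr hc'⟩ with hF'
  have hsF := parseval_cont_s6 F
  have hsF' := parseval_cont_s6 F'
  have hcF : ∀ n, fourierCoeff (⇑F) n = fourierCoeffOn hL f n := fun n => by
    rw [hF, ContinuousMap.coe_mk]; exact fourierCoeff_lift_eq' hper n
  have hcF' : ∀ n, fourierCoeff (⇑F') n = fourierCoeffOn hL f' n := fun n => by
    rw [hF', ContinuousMap.coe_mk]; exact fourierCoeff_lift_eq' hper' n
  have h0 : fourierCoeffOn hL f 0 = 0 := by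
    rw [fourierCoeffOn_eq_integral _ 0 hL]
    simp only [neg_zero, fourier_zero, one_smul, hmean, smul_zero]
  have hrel : ∀ n : ℤ, n ≠ 0 →
      ‖fourierCoeffOn hL f n‖ ^ 2 ≤ L ^ 2 / (4 * π ^ 2) * ‖fourierCoeffOn hL f' n‖ ^ 2 := by
    intro n hn
    have key := fourierCoeffOn_of_hasDerivAt hL hn (fun x _ => hd x) (hc'.intervalIntegrable 0 L)
    have hfL : f L - f 0 = 0 := sub_eq_zero.mpr (by simpa using hper 0)
    rw [hfL, mul_zero, zero_sub] at key
    have hnn : (1:ℝ) ≤ |(n:ℝ)| := by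
      rw [← Int.cast_abs]; exact_mod_cast Int.one_le_abs hn
    have hnorm : ‖fourierCoeffOn hL f n‖
        = L / (2 * π * |(n:ℝ)|) * ‖fourierCoeffOn hL f' n‖ := by
      rw [key, norm_mul, norm_neg, norm_mul]
      have e1 : ‖(1 : ℂ) / (-2 * ↑π * I * ↑n)‖ = 1 / (2 * π * |(n:ℝ)|) := by
        rw [norm_div, norm_one]
        simp [norm_mul, abs_of_pos Real.pi_pos]
      rw [e1]
      have e2 : ‖(L : ℂ) - ((0:ℝ) : ℂ)‖ = L := by
        simp [abs_of_pos hL]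
      rw [e2]
      ring
    rw [hnorm, mul_pow]
    have hπ := Real.pi_pos
    have hstep : (L / (2 * π * |(n:ℝ)|)) ^ 2 ≤ L ^ 2 / (4 * π ^ 2) := by
      rw [div_pow]
      apply div_le_div_of_nonneg_left (by positivity) (by positivity)
      have h1 : (1:ℝ) ≤ |(n:ℝ)| ^ 2 := by nlinarith [abs_nonneg ((n:ℝ))]
      nlinarith [h1, hπ, sq_nonneg π]
    exact mul_le_mul_of_nonneg_right hstep (sq_nonneg _)
  have hbound : ∀ n : ℤ, ‖fourierCoeff (⇑F) n‖ ^ 2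
      ≤ L ^ 2 / (4 * π ^ 2) * ‖fourierCoeff (⇑F') n‖ ^ 2 := by
    intro n
    rw [hcF, hcF']
    rcases eq_or_ne n 0 with rfl | hn
    · rw [h0, norm_zero]
      norm_num
      positivity
    · exact hrel n hn
  have hts := Summable.tsum_le_tsum hbound hsF.summable (hsF'.summable.mul_left _)
  rw [hsF.tsum_eq, tsum_mul_left, hsF'.tsum_eq] at hts
  have e1 := haar_integral_norm_sq hper
  have e2 := haar_integral_norm_sq hper'
  have hFe : (∫ t : AddCircle L, ‖F t‖ ^ 2 ∂AddCircle.haarAddCircle)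
      = ∫ t : AddCircle L, ‖Function.Periodic.lift hper t‖ ^ 2 ∂AddCircle.haarAddCircle := rfl
  have hFe' : (∫ t : AddCircle L, ‖F' t‖ ^ 2 ∂AddCircle.haarAddCircle)
      = ∫ t : AddCircle L, ‖Function.Periodic.lift hper' t‖ ^ 2 ∂AddCircle.haarAddCircle := rfl
  rw [hFe, hFe'] at hts
  rw [e1, e2]
  nlinarith [hts, sq_nonneg π]

lemma wirtinger_real (L : ℝ) (hL : 0 < L) (g g' : ℝ → ℝ)
    (hd : ∀ x, HasDerivAt g (g' x) x) (hc' : Continuous g')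
    (hper : Function.Periodic g L)
    (hmean : ∫ s in (0:ℝ)..L, g s = 0) :
    ∫ s in (0:ℝ)..L, (g s) ^ 2 ≤ L ^ 2 / (4 * π ^ 2) * ∫ s in (0:ℝ)..L, (g' s) ^ 2 := by
  have h := wirtinger_complex L hL (fun s => (g s : ℂ)) (fun s => (g' s : ℂ))
    (fun x => (hd x).ofReal_comp) (Complex.continuous_ofReal.comp hc')
    (fun s => by simp [hper s])
    (by rw [intervalIntegral.integral_ofReal, hmean, Complex.ofReal_zero])
  simpa only [Complex.norm_real, Real.norm_eq_abs, _root_.sq_abs] using h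


theorem mean_square_chord_bound
    (L : ℝ) (hL : 0 < L) (γ : ℝ → EuclideanSpace ℝ (Fin 3))
    (hC1 : ContDiff ℝ 1 γ)
    (hper : ∀ s, γ (s + L) = γ s)
    (hunit : ∀ s, ‖deriv γ s‖ = 1) :
    ∫ s in (0:ℝ)..L, ∫ t in (0:ℝ)..L, ‖γ s - γ t‖ ^ 2
      ≤ L ^ 4 / (2 * Real.pi ^ 2) := by
  have hγc : Continuous γ := hC1.continuous
  have hγ' : Continuous (deriv γ) := hC1.continuous_deriv le_rfl
  have hdγ : ∀ x, HasDerivAt γ (deriv γ x) x := fun x =>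
    ((hC1.differentiable one_ne_zero) x).hasDerivAt
  set c : EuclideanSpace ℝ (Fin 3) := L⁻¹ • ∫ s in (0:ℝ)..L, γ s with hc
  set g : ℝ → EuclideanSpace ℝ (Fin 3) := fun s => γ s - c with hg
  have hgc : Continuous g := hγc.sub continuous_const
  have hdg : ∀ x, HasDerivAt g (deriv γ x) x := fun x => (hdγ x).sub_const c
  have hgper : Function.Periodic g L := fun s => by simp [hg, hper s]
  have hgmean : ∫ s in (0:ℝ)..L, g s = 0 := by
    rw [hg]
    rw [intervalIntegral.integral_sub (hγc.intervalIntegrable 0 L) intervalIntegrable_const,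
      intervalIntegral.integral_const, hc, sub_zero, smul_smul, mul_inv_cancel₀ hL.ne',
      one_smul, sub_self]
  set A : ℝ := ∫ t in (0:ℝ)..L, ‖g t‖ ^ 2 with hA
  -- inner integral
  have hInner : ∀ s, (∫ t in (0:ℝ)..L, ‖γ s - γ t‖ ^ 2) = L * ‖g s‖ ^ 2 + A := by
    intro s
    have h1 : ∀ t, ‖γ s - γ t‖ ^ 2
        = ‖g s‖ ^ 2 - 2 * (inner ℝ (g s) (g t) : ℝ) + ‖g t‖ ^ 2 := fun t => by
      have hst : γ s - γ t = g s - g t := by simp [hg]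
      rw [hst, @norm_sub_sq_real]
    simp_rw [h1]
    have hi1 : IntervalIntegrable (fun t => ‖g s‖ ^ 2 - 2 * (inner ℝ (g s) (g t) : ℝ)) volume 0 L :=
      (continuous_const.sub (continuous_const.mul (continuous_const.inner hgc))).intervalIntegrable 0 L
    have hi2 : IntervalIntegrable (fun t => ‖g t‖ ^ 2) volume 0 L :=
      ((hgc.norm).pow 2).intervalIntegrable 0 L
    rw [intervalIntegral.integral_add hi1 hi2,
      intervalIntegral.integral_sub (intervalIntegrable_const)
        ((continuous_const.mul (continuous_const.inner hgc)).intervalIntegrable 0 L),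
      intervalIntegral.integral_const, intervalIntegral.integral_const_mul]
    have hinner0 : (∫ t in (0:ℝ)..L, (inner ℝ (g s) (g t) : ℝ)) = 0 := by
      have := (innerSL ℝ (g s)).intervalIntegral_comp_comm (Continuous.intervalIntegrable (μ := volume) hgc 0 L)
      simp only [innerSL_apply_apply] at this
      rw [this, hgmean, inner_zero_right]
    rw [hinner0, mul_zero, sub_zero, sub_zero, smul_eq_mul]
  have hLHS : (∫ s in (0:ℝ)..L, ∫ t in (0:ℝ)..L, ‖γ s - γ t‖ ^ 2) = 2 * L * A := by
    simp_rw [hInner]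
    rw [intervalIntegral.integral_add (f := fun s => L * ‖g s‖ ^ 2) (g := fun _ => A)
        ((continuous_const.mul ((hgc.norm).pow 2)).intervalIntegrable 0 L)
        intervalIntegrable_const,
      intervalIntegral.integral_const_mul, intervalIntegral.integral_const, sub_zero,
      smul_eq_mul]
    ring
  -- Wirtinger componentwise
  have hnormsq : ∀ x : EuclideanSpace ℝ (Fin 3), ‖x‖ ^ 2 = ∑ i, (x i) ^ 2 := fun x => by
    rw [EuclideanSpace.norm_eq, Real.sq_sqrt (Finset.sum_nonneg fun i _ => sq_nonneg _)]
    simp [Real.norm_eq_abs, _root_.sq_abs]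
  have hderivL : (∫ s in (0:ℝ)..L, ∑ i : Fin 3, (deriv γ s i) ^ 2) = L := by
    have : ∀ s, (∑ i : Fin 3, (deriv γ s i) ^ 2) = 1 := fun s => by
      rw [← hnormsq, hunit, one_pow]
    simp_rw [this]
    simp
  have hcomp : ∀ i : Fin 3,
      (∫ s in (0:ℝ)..L, (g s i) ^ 2) ≤ L ^ 2 / (4 * π ^ 2) * ∫ s in (0:ℝ)..L, (deriv γ s i) ^ 2 := by
    intro i
    apply wirtinger_real L hL _ _ _ ((EuclideanSpace.proj i).continuous.comp hγ')
    · intro s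
      show g (s + L) i = g s i
      rw [hgper s]
    · have := (EuclideanSpace.proj (𝕜 := ℝ) i).intervalIntegral_comp_comm
        (Continuous.intervalIntegrable (μ := volume) hgc 0 L)
      have h2 : (∫ s in (0:ℝ)..L, g s i)
          = (EuclideanSpace.proj (𝕜 := ℝ) i) (∫ s in (0:ℝ)..L, g s) := this
      rw [h2, hgmean, map_zero]
    · intro x
      have := ((EuclideanSpace.proj (𝕜 := ℝ) i).hasFDerivAt).comp_hasDerivAt x (hdg x)
      exact this
  have hAle : A ≤ L ^ 3 / (4 * π ^ 2) := by
    have hA2 : A = ∑ i : Fin 3, ∫ s in (0:ℝ)..L, (g s i) ^ 2 := by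
      rw [hA]
      simp_rw [hnormsq]
      rw [intervalIntegral.integral_finset_sum]
      intro i _
      exact (((EuclideanSpace.proj i).continuous.comp hgc).pow 2).intervalIntegrable 0 L
    have hsum : (∑ i : Fin 3, ∫ s in (0:ℝ)..L, (g s i) ^ 2)
        ≤ ∑ i : Fin 3, L ^ 2 / (4 * π ^ 2) * ∫ s in (0:ℝ)..L, (deriv γ s i) ^ 2 :=
      Finset.sum_le_sum fun i _ => hcomp i
    rw [← Finset.mul_sum] at hsum
    have hswap : (∑ i : Fin 3, ∫ s in (0:ℝ)..L, (deriv γ s i) ^ 2)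
        = ∫ s in (0:ℝ)..L, ∑ i : Fin 3, (deriv γ s i) ^ 2 := by
      symm
      apply intervalIntegral.integral_finset_sum
      intro i _
      exact (((EuclideanSpace.proj i).continuous.comp hγ').pow 2).intervalIntegrable 0 L
    rw [hswap, hderivL] at hsum
    rw [hA2]
    calc (∑ i : Fin 3, ∫ s in (0:ℝ)..L, (g s i) ^ 2) ≤ L ^ 2 / (4 * π ^ 2) * L := hsum
    _ = L ^ 3 / (4 * π ^ 2) := by ring
  rw [hLHS]
  have hπ := Real.pi_pos
  calc 2 * L * A ≤ 2 * L * (L ^ 3 / (4 * π ^ 2)) := by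
        apply mul_le_mul_of_nonneg_left hAle (by positivity)
  _ = L ^ 4 / (2 * π ^ 2) := by ring
end

section
/- Let (Ω, μ) be a probability measure space and let f : Ω → ℝ be measurable with 0 < f(ω) ≤ M for μ-almost every ω, for some constant M, and suppose that ∫ f^{−p₀} dμ < ∞ for some p₀ ∈ (0, 1). Then the limit as p → 0 (through nonzero values) of (∫ f^p dμ)^{1/p} exists and equals exp(∫ log f dμ); in particular log f is μ-integrable. -/
open MeasureTheory Filter Topology

private lemma abs_exp_sub_one_le' (t : ℝ) : |Real.exp t - 1| ≤ |t| * Real.exp |t| := by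
  rcases le_or_gt 0 t with h | h
  · rw [abs_of_nonneg h, abs_of_nonneg (by linarith [Real.one_le_exp h] : (0:ℝ) ≤ Real.exp t - 1)]
    have h1 := Real.add_one_le_exp (-t)
    have h2 : Real.exp t * Real.exp (-t) = 1 := by rw [← Real.exp_add]; simp
    nlinarith [Real.exp_pos t]
  · have he1 : Real.exp t < 1 := Real.exp_lt_one_iff.mpr h
    rw [abs_of_neg h, abs_of_nonpos (by linarith : Real.exp t - 1 ≤ 0)]
    nlinarith [Real.add_one_le_exp t, Real.one_le_exp (neg_nonneg.mpr h.le)]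

private lemma tendsto_rpow_sub_one_div {x : ℝ} (hx : 0 < x) :
    Tendsto (fun p : ℝ => (x ^ p - 1) / p) (𝓝[≠] 0) (𝓝 (Real.log x)) := by
  have hd : HasDerivAt (fun p : ℝ => Real.exp (Real.log x * p)) (Real.log x) 0 := by
    have := (Real.hasDerivAt_exp (Real.log x * 0)).comp 0
      ((hasDerivAt_id (0:ℝ)).const_mul (Real.log x))
    simpa [Function.comp_def] using this
  have h := hasDerivAt_iff_tendsto_slope.mp hd
  refine h.congr fun p => ?_
  rw [slope_def_field, Real.rpow_def_of_pos hx]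
  simp

private lemma neg_log_le {x a : ℝ} (hx : 0 < x) (ha : 0 < a) :
    -Real.log x ≤ a⁻¹ * x ^ (-a) := by
  have h := Real.log_le_sub_one_of_pos (Real.rpow_pos_of_pos hx (-a))
  rw [Real.log_rpow hx] at h
  have hp := Real.rpow_pos_of_pos hx (-a)
  have hc : a * a⁻¹ = 1 := mul_inv_cancel₀ ha.ne'
  nlinarith [inv_pos.mpr ha]

theorem p_mean_tendsto_geometric_mean
    {Ω : Type*} [MeasurableSpace Ω] (μ : Measure Ω) [IsProbabilityMeasure μ]
    (f : Ω → ℝ) (hf : Measurable f) (M : ℝ)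
    (hbdd : ∀ᵐ ω ∂μ, 0 < f ω ∧ f ω ≤ M)
    (p₀ : ℝ) (hp₀ : p₀ ∈ Set.Ioo (0:ℝ) 1)
    (hint : Integrable (fun ω => f ω ^ (-p₀)) μ) :
    Integrable (fun ω => Real.log (f ω)) μ ∧
      Tendsto (fun p : ℝ => (∫ ω, f ω ^ p ∂μ) ^ (1 / p)) (𝓝[≠] 0)
        (𝓝 (Real.exp (∫ ω, Real.log (f ω) ∂μ))) := by
  obtain ⟨hp₀0, hp₀1⟩ := hp₀
  set M' : ℝ := max M 1 with hM'def
  have hM'1 : (1:ℝ) ≤ M' := le_max_right _ _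
  have hM'0 : (0:ℝ) < M' := lt_of_lt_of_le one_pos hM'1
  have hlogM' : 0 ≤ Real.log M' := Real.log_nonneg hM'1
  have hbdd' : ∀ᵐ ω ∂μ, 0 < f ω ∧ f ω ≤ M' :=
    hbdd.mono fun ω h => ⟨h.1, h.2.trans (le_max_left _ _)⟩
  -- Part 1 : integrability of log f
  have hbint1 : Integrable (fun ω => Real.log M' + p₀⁻¹ * f ω ^ (-p₀)) μ :=
    (integrable_const _).add (hint.const_mul p₀⁻¹)
  have hlogint : Integrable (fun ω => Real.log (f ω)) μ := by
    refine Integrable.mono' hbint1 (Real.measurable_log.comp hf).aestronglyMeasurable ?_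
    filter_upwards [hbdd'] with ω hω
    obtain ⟨h0, hM⟩ := hω
    have h1 : Real.log (f ω) ≤ Real.log M' := Real.log_le_log h0 hM
    have h2 : -Real.log (f ω) ≤ p₀⁻¹ * f ω ^ (-p₀) := neg_log_le h0 hp₀0
    have h3 : 0 < f ω ^ (-p₀) := Real.rpow_pos_of_pos h0 _
    rw [Real.norm_eq_abs, abs_le]
    constructor <;> nlinarith [inv_pos.mpr hp₀0]
  refine ⟨hlogint, ?_⟩
  set L : ℝ := ∫ ω, Real.log (f ω) ∂μ with hLdef
  -- the crux pointwise bound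
  have crux : ∀ x : ℝ, 0 < x → x ≤ M' → ∀ p : ℝ, |p| ≤ p₀ / 2 → p ≠ 0 →
      |(x ^ p - 1) / p| ≤ Real.log M' * M' + (2 / p₀) * x ^ (-p₀) := by
    intro x hx0 hxM p hp hp0
    have hpabs : 0 < |p| := abs_pos.mpr hp0
    have e1 : (x ^ p - 1) / p = (Real.exp (Real.log x * p) - 1) / p := by
      rw [Real.rpow_def_of_pos hx0]
    have step : |(x ^ p - 1) / p| ≤ |Real.log x| * Real.exp (|Real.log x| * |p|) := by
      rw [e1, abs_div, div_le_iff₀ hpabs]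
      calc |Real.exp (Real.log x * p) - 1|
          ≤ |Real.log x * p| * Real.exp |Real.log x * p| := abs_exp_sub_one_le' _
        _ = |Real.log x| * Real.exp (|Real.log x| * |p|) * |p| := by
            rw [abs_mul]; ring
    have hxp : 0 < x ^ (-p₀) := Real.rpow_pos_of_pos hx0 _
    rcases le_or_gt 1 x with hx1 | hx1
    · -- x ≥ 1
      have hlx : |Real.log x| = Real.log x := abs_of_nonneg (Real.log_nonneg hx1)
      have h1 : Real.log x ≤ Real.log M' := Real.log_le_log hx0 hxM
      have h2 : Real.exp (Real.log x * |p|) ≤ M' := by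
        rw [mul_comm, ← Real.log_rpow hx0, Real.exp_log (Real.rpow_pos_of_pos hx0 _)]
        calc x ^ |p| ≤ M' ^ |p| := Real.rpow_le_rpow hx0.le hxM (abs_nonneg p)
          _ ≤ M' ^ (1:ℝ) := Real.rpow_le_rpow_of_exponent_le hM'1 (by linarith)
          _ = M' := Real.rpow_one M'
      have h3 : |Real.log x| * Real.exp (|Real.log x| * |p|) ≤ Real.log M' * M' := by
        rw [hlx]; exact mul_le_mul h1 h2 (Real.exp_pos _).le hlogM'
      have h4 : 0 < (2 / p₀) * x ^ (-p₀) := by positivity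
      calc |(x ^ p - 1) / p| ≤ _ := step
        _ ≤ Real.log M' * M' := h3
        _ ≤ _ := by linarith
    · -- x < 1
      have hlx : |Real.log x| = -Real.log x := abs_of_neg (Real.log_neg hx0 hx1)
      have hhalf : (0:ℝ) < p₀ / 2 := by linarith
      have h1 : -Real.log x ≤ (2 / p₀) * x ^ (-(p₀/2)) := by
        have h := neg_log_le hx0 hhalf
        rwa [show (p₀/2)⁻¹ = 2 / p₀ by field_simp] at h
      have h2 : Real.exp (-Real.log x * |p|) ≤ x ^ (-(p₀/2)) := by
        rw [show -Real.log x * |p| = Real.log x * (-|p|) by ring,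
          ← Real.rpow_def_of_pos hx0]
        exact Real.rpow_le_rpow_of_exponent_ge hx0 hx1.le (by linarith)
      have hxh : 0 < x ^ (-(p₀/2)) := Real.rpow_pos_of_pos hx0 _
      have key : |Real.log x| * Real.exp (|Real.log x| * |p|)
          ≤ (2 / p₀) * x ^ (-p₀) := by
        calc |Real.log x| * Real.exp (|Real.log x| * |p|)
            ≤ ((2 / p₀) * x ^ (-(p₀/2))) * x ^ (-(p₀/2)) := by
              rw [hlx]
              apply mul_le_mul h1 h2 (Real.exp_pos _).le
              positivity
          _ = (2 / p₀) * x ^ (-p₀) := by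
              rw [mul_assoc, ← Real.rpow_add hx0]; ring_nf
      have h4 : 0 ≤ Real.log M' * M' := by positivity
      calc |(x ^ p - 1) / p| ≤ _ := step
        _ ≤ (2 / p₀) * x ^ (-p₀) := key
        _ ≤ _ := by linarith
  -- eventually p is small and nonzero
  have hsmall : ∀ᶠ p : ℝ in 𝓝[≠] 0, |p| ≤ p₀ / 2 ∧ p ≠ 0 := by
    have h1 : ∀ᶠ p : ℝ in 𝓝[≠] 0, |p| ≤ p₀ / 2 := by
      apply eventually_nhdsWithin_of_eventually_nhds
      have h : Tendsto (fun p : ℝ => |p|) (𝓝 0) (𝓝 0) := by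
        simpa using (continuous_abs.tendsto (0:ℝ))
      exact h.eventually_le_const (by linarith)
    exact h1.and (eventually_mem_nhdsWithin.mono fun p hp => hp)
  -- dominated convergence
  have hboundInt : Integrable (fun ω => Real.log M' * M' + (2 / p₀) * f ω ^ (-p₀)) μ :=
    (integrable_const _).add (hint.const_mul _)
  have hmeas_rpow : ∀ p : ℝ, Measurable fun ω => f ω ^ p := by
    intro p; fun_prop
  have hJ0 : Tendsto (fun p : ℝ => ∫ ω, (f ω ^ p - 1) / p ∂μ) (𝓝[≠] 0) (𝓝 L) := by
    refine tendsto_integral_filter_of_dominated_convergence _ ?_ ?_ hboundInt ?_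
    · filter_upwards with p
      exact (((hmeas_rpow p).sub measurable_const).div_const p).aestronglyMeasurable
    · filter_upwards [hsmall] with p hp
      filter_upwards [hbdd'] with ω hω
      simpa only [Real.norm_eq_abs] using crux (f ω) hω.1 hω.2 p hp.1 hp.2
    · filter_upwards [hbdd'] with ω hω
      exact tendsto_rpow_sub_one_div hω.1
  -- integrability of f^p for small p
  have hbint2 : Integrable (fun ω => M' ^ p₀ + f ω ^ (-p₀)) μ :=
    (integrable_const _).add hint
  have hIntp : ∀ p : ℝ, |p| ≤ p₀ → Integrable (fun ω => f ω ^ p) μ := by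
    intro p hp
    refine Integrable.mono' hbint2 (hmeas_rpow p).aestronglyMeasurable ?_
    filter_upwards [hbdd'] with ω hω
    obtain ⟨h0, hM⟩ := hω
    have hxp : 0 < f ω ^ p := Real.rpow_pos_of_pos h0 _
    rw [Real.norm_eq_abs, abs_of_pos hxp]
    rcases le_or_gt 1 (f ω) with hx1 | hx1
    · have ha : f ω ^ p ≤ f ω ^ p₀ :=
        Real.rpow_le_rpow_of_exponent_le hx1 (le_of_abs_le hp)
      have h2 : f ω ^ p₀ ≤ M' ^ p₀ := Real.rpow_le_rpow h0.le hM hp₀0.le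
      have h3 : 0 < f ω ^ (-p₀) := Real.rpow_pos_of_pos h0 _
      linarith
    · have ha : f ω ^ p ≤ f ω ^ (-p₀) := by
        apply Real.rpow_le_rpow_of_exponent_ge h0 hx1.le
        have := neg_abs_le p; linarith
      have h2 : 0 < M' ^ p₀ := Real.rpow_pos_of_pos hM'0 _
      linarith
  -- rewrite the integral of the difference quotient
  have hJeq : ∀ᶠ p : ℝ in 𝓝[≠] 0,
      ∫ ω, (f ω ^ p - 1) / p ∂μ = ((∫ ω, f ω ^ p ∂μ) - 1) / p := by
    filter_upwards [hsmall] with p hp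
    have h1 : Integrable (fun ω => f ω ^ p) μ := hIntp p (by
      have := hp.1; linarith)
    rw [integral_div, integral_sub h1 (integrable_const 1), integral_const]
    simp
  set J : ℝ → ℝ := fun p => ((∫ ω, f ω ^ p ∂μ) - 1) / p with hJdef
  have hJ : Tendsto J (𝓝[≠] 0) (𝓝 L) := hJ0.congr' hJeq
  set I : ℝ → ℝ := fun p => ∫ ω, f ω ^ p ∂μ with hIdef
  have hI : Tendsto I (𝓝[≠] 0) (𝓝 1) := by
    have hmul : Tendsto (fun p : ℝ => 1 + p * J p) (𝓝[≠] 0) (𝓝 1) := by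
      have h : Tendsto (fun p : ℝ => p * J p) (𝓝[≠] 0) (𝓝 (0 * L)) :=
        (tendsto_id.mono_left nhdsWithin_le_nhds).mul hJ
      simpa using tendsto_const_nhds.add h
    refine hmul.congr' ?_
    filter_upwards [eventually_mem_nhdsWithin] with p hp
    have hp0 : p ≠ 0 := hp
    simp only [hJdef, hIdef]
    field_simp
    ring
  have hIpos : ∀ᶠ p : ℝ in 𝓝[≠] 0, 0 < I p :=
    hI.eventually (eventually_gt_nhds one_pos)
  -- squeeze log (I p) / p on both sides of 0
  set T : ℝ → ℝ := fun p => Real.log (I p) / p with hTdef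
  have hlow : Tendsto (fun p => J p / I p) (𝓝[≠] 0) (𝓝 L) := by
    have h := hJ.div hI one_ne_zero
    rw [div_one] at h; exact h
  have hbpos : 𝓝[>] (0:ℝ) ≤ 𝓝[≠] 0 :=
    nhdsWithin_mono 0 fun x hx => ne_of_gt hx
  have hbneg : 𝓝[<] (0:ℝ) ≤ 𝓝[≠] 0 :=
    nhdsWithin_mono 0 fun x hx => ne_of_lt hx
  have logI_bounds : ∀ p : ℝ, 0 < I p →
      (I p - 1) / I p ≤ Real.log (I p) ∧ Real.log (I p) ≤ I p - 1 := by
    intro p hIp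
    refine ⟨?_, Real.log_le_sub_one_of_pos hIp⟩
    have h := Real.log_le_sub_one_of_pos (inv_pos.mpr hIp)
    rw [Real.log_inv] at h
    rw [sub_div, div_self hIp.ne']
    rw [one_div]
    linarith
  have hTpos : Tendsto T (𝓝[>] 0) (𝓝 L) := by
    refine tendsto_of_tendsto_of_tendsto_of_le_of_le' (hlow.mono_left hbpos)
      (hJ.mono_left hbpos) ?_ ?_
    · filter_upwards [eventually_mem_nhdsWithin, (hIpos.filter_mono hbpos)] with p hp hIp
      have hp0 : (0:ℝ) < p := hp
      obtain ⟨hl, _⟩ := logI_bounds p hIp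
      have h : (I p - 1) / I p / p ≤ Real.log (I p) / p := by gcongr
      calc J p / I p = (I p - 1) / I p / p := by rw [hJdef]; ring
        _ ≤ T p := h
    · filter_upwards [eventually_mem_nhdsWithin, (hIpos.filter_mono hbpos)] with p hp hIp
      have hp0 : (0:ℝ) < p := hp
      obtain ⟨_, hu⟩ := logI_bounds p hIp
      have h : Real.log (I p) / p ≤ (I p - 1) / p := by gcongr
      exact h
  have hTneg : Tendsto T (𝓝[<] 0) (𝓝 L) := by
    refine tendsto_of_tendsto_of_tendsto_of_le_of_le' (hJ.mono_left hbneg)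
      (hlow.mono_left hbneg) ?_ ?_
    · filter_upwards [eventually_mem_nhdsWithin, (hIpos.filter_mono hbneg)] with p hp hIp
      have hp0 : p < 0 := hp
      obtain ⟨_, hu⟩ := logI_bounds p hIp
      exact div_le_div_of_nonpos_of_le hp0.le hu
    · filter_upwards [eventually_mem_nhdsWithin, (hIpos.filter_mono hbneg)] with p hp hIp
      have hp0 : p < 0 := hp
      obtain ⟨hl, _⟩ := logI_bounds p hIp
      have h : Real.log (I p) / p ≤ (I p - 1) / I p / p :=
        div_le_div_of_nonpos_of_le hp0.le hl
      calc T p ≤ (I p - 1) / I p / p := h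
        _ = J p / I p := by rw [hJdef]; ring
  have hT : Tendsto T (𝓝[≠] 0) (𝓝 L) := by
    rw [← nhdsLT_sup_nhdsGT (0:ℝ)]
    exact tendsto_sup.mpr ⟨hTneg, hTpos⟩
  have hfinal : Tendsto (fun p : ℝ => Real.exp (T p)) (𝓝[≠] 0) (𝓝 (Real.exp L)) :=
    (Real.continuous_exp.tendsto L).comp hT
  refine hfinal.congr' ?_
  filter_upwards [hIpos] with p hIp
  rw [hTdef]
  rw [Real.rpow_def_of_pos hIp, mul_one_div]
end

section
/- Let L > 0 and let γ : ℝ → ℝ³ be continuously differentiable and L-periodic with ‖γ'(s)‖ = 1 for all s, and injective on [0, L). Then the function (s, t) ↦ log ‖γ(s) − γ(t)‖ is Lebesgue-integrable on [0, L] × [0, L]; in particular ∫₀^L ∫₀^L |log ‖γ(s) − γ(t)‖| ds dt < ∞. -/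
open MeasureTheory Real Set

lemma integrableOn_log_Ioc01 : IntegrableOn Real.log (Set.Ioc (0:ℝ) 1) volume := by
  have h : IntegrableOn (fun x => -Real.log x) (Set.Ioc (0:ℝ) 1) volume := by
    have := intervalIntegral.integrableOn_deriv_of_nonneg
      (g := fun x => x - x * Real.log x) (g' := fun x => -Real.log x) (a := (0:ℝ)) (b := 1)
      ((continuous_id.sub Real.continuous_mul_log).continuousOn)
      (fun x hx => by
        have h1 : HasDerivAt (fun x : ℝ => x * Real.log x) (Real.log x + 1) x := by
          have := (hasDerivAt_id x).mul (Real.hasDerivAt_log (ne_of_gt hx.1))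
          exact this.congr_deriv (by simp [mul_inv_cancel₀ (ne_of_gt hx.1), add_comm])
        exact ((hasDerivAt_id x).sub h1).congr_deriv (by ring))
      (fun x hx => by
        show (0:ℝ) ≤ -Real.log x
        have := Real.log_nonpos (le_of_lt hx.1) (le_of_lt hx.2)
        linarith)
    exact this
  have h2 := h.neg
  simp only [Pi.neg_def, neg_neg] at h2
  exact h2

lemma intervalIntegrable_log_abs (a b : ℝ) :
    IntervalIntegrable (fun x => Real.log |x|) volume a b := by
  have key : ∀ b : ℝ, 0 ≤ b → IntervalIntegrable (fun x => Real.log |x|) volume 0 b := by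
    intro b hb
    have h1 : IntegrableOn Real.log (Set.Ioc (0:ℝ) b) volume := by
      rcases le_or_gt b 1 with h | h
      · exact integrableOn_log_Ioc01.mono_set (Set.Ioc_subset_Ioc_right h)
      · have h2 : IntegrableOn Real.log (Set.Ioc (1:ℝ) b) volume :=
          (ContinuousOn.integrableOn_Icc (fun x hx => (Real.continuousAt_log
            (by rcases hx with ⟨h1x, _⟩; linarith)).continuousWithinAt)).mono_set Set.Ioc_subset_Icc_self
        have : Set.Ioc (0:ℝ) b = Set.Ioc 0 1 ∪ Set.Ioc 1 b := by
          rw [Set.Ioc_union_Ioc_eq_Ioc] <;> linarith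
        rw [this]
        exact integrableOn_log_Ioc01.union h2
    have h2 : IntegrableOn (fun x => Real.log |x|) (Set.Ioc (0:ℝ) b) volume := by
      apply h1.congr_fun (fun x hx => by rw [abs_of_pos hx.1]) measurableSet_Ioc
    rw [intervalIntegrable_iff_integrableOn_Ioc_of_le hb]
    exact h2
  have key2 : ∀ b : ℝ, IntervalIntegrable (fun x => Real.log |x|) volume 0 b := by
    intro b
    rcases le_or_gt 0 b with h | h
    · exact key b h
    · have := (key (-b) (by linarith)).symm
      have h2 := (IntervalIntegrable.iff_comp_neg (by simp)).mp this
      simpa using h2.symm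
  exact (key2 a).symm.trans (key2 b)

lemma square_integrable (L : ℝ) (hL : 0 < L) (f : ℝ → ℝ) (hm : Measurable f)
    (hf : IntegrableOn f (Set.Icc (-L) L) volume) :
    IntegrableOn (fun q : ℝ × ℝ => f (q.1 - q.2)) (Set.Icc 0 L ×ˢ Set.Icc 0 L) volume := by
  have hfi : IntervalIntegrable f volume (-L) L := by
    rw [intervalIntegrable_iff_integrableOn_Icc_of_le (by linarith)]
    exact hf
  -- interval integrability of t ↦ f (s - t) on [0, L] for s ∈ [0, L]
  have hslice : ∀ s ∈ Set.Icc (0:ℝ) L, IntervalIntegrable (fun t => f (s - t)) volume 0 L := by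
    intro s hs
    have h1 : IntervalIntegrable f volume (s - L) s :=
      hfi.mono_set (by
        rw [Set.uIcc_of_le (by linarith [hs.1, hs.2] : s - L ≤ s),
          Set.uIcc_of_le (by linarith : -L ≤ L)]
        exact Set.Icc_subset_Icc (by linarith [hs.1, hs.2]) hs.2)
    have := (h1.comp_sub_left s).symm
    simpa using this
  rw [IntegrableOn, Measure.volume_eq_prod, ← Measure.prod_restrict]
  have hmes : AEStronglyMeasurable (fun q : ℝ × ℝ => f (q.1 - q.2))
      ((volume.restrict (Set.Icc 0 L)).prod (volume.restrict (Set.Icc 0 L))) :=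
    (hm.comp (measurable_fst.sub measurable_snd)).aestronglyMeasurable
  rw [integrable_prod_iff hmes]
  constructor
  · filter_upwards [ae_restrict_mem measurableSet_Icc] with s hs
    have := hslice s hs
    rw [intervalIntegrable_iff_integrableOn_Icc_of_le (le_of_lt hL)] at this
    exact this
  · set C := ∫ x in Set.Icc (-L) L, ‖f x‖ with hC
    apply Integrable.mono' (g := fun _ => C) (integrable_const C)
    · exact (StronglyMeasurable.integral_prod_right (f := fun (s t : ℝ) => ‖f (s - t)‖)
        ((hm.comp (measurable_fst.sub measurable_snd)).norm).stronglyMeasurable).aestronglyMeasurable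
    · filter_upwards [ae_restrict_mem measurableSet_Icc] with s hs
      have h0 : (0:ℝ) ≤ ∫ t in Set.Icc (0:ℝ) L, ‖f (s - t)‖ :=
        integral_nonneg (fun t => norm_nonneg _)
      rw [Real.norm_eq_abs, abs_of_nonneg h0]
      -- change variables
      have h1 : ∫ t in Set.Icc (0:ℝ) L, ‖f (s - t)‖ = ∫ u in Set.Icc (s - L) s, ‖f u‖ := by
        rw [integral_Icc_eq_integral_Ioc, integral_Icc_eq_integral_Ioc,
          ← intervalIntegral.integral_of_le (le_of_lt hL),
          ← intervalIntegral.integral_of_le (by linarith : s - L ≤ s)]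
        simpa using intervalIntegral.integral_comp_sub_left (fun u => ‖f u‖) s (a := 0) (b := L)
      rw [h1, hC]
      apply setIntegral_mono_set hf.norm
      · exact Filter.Eventually.of_forall (fun x => norm_nonneg _)
      · exact HasSubset.Subset.eventuallyLE
          (Set.Icc_subset_Icc (by linarith [hs.1]) hs.2)

lemma chord_lower (L : ℝ) (hL : 0 < L) (γ : ℝ → EuclideanSpace ℝ (Fin 3))
    (hC1 : ContDiff ℝ 1 γ) (hper : ∀ s, γ (s + L) = γ s)
    (hunit : ∀ s, ‖deriv γ s‖ = 1) (hinj : Set.InjOn γ (Set.Ico 0 L)) :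
    ∃ c > 0, ∀ s ∈ Set.Icc (0:ℝ) L, ∀ t ∈ Set.Icc (0:ℝ) L,
      c * min |s - t| (L - |s - t|) ≤ ‖γ s - γ t‖ := by
  have hdiff : Differentiable ℝ γ := hC1.differentiable one_ne_zero
  have hcont : Continuous γ := hdiff.continuous
  have hcd : Continuous (deriv γ) := hC1.continuous_deriv le_rfl
  have hperγ : Function.Periodic γ L := hper
  have hperd : Function.Periodic (deriv γ) L := by
    intro s
    have : γ = fun x => γ (x + L) := by funext x; rw [hper]
    conv_lhs => rw [← deriv_comp_add_const γ L s]
    rw [← this]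
  -- uniform continuity of deriv γ
  obtain ⟨δ₀, hδ₀, hδ₀'⟩ : ∃ δ₀ > 0, ∀ x ∈ Set.Icc (-L) (2*L), ∀ y ∈ Set.Icc (-L) (2*L),
      dist x y < δ₀ → dist (deriv γ x) (deriv γ y) < 1/2 := by
    have huc : UniformContinuousOn (deriv γ) (Set.Icc (-L) (2*L)) :=
      isCompact_Icc.uniformContinuousOn_of_continuous hcd.continuousOn
    exact Metric.uniformContinuousOn_iff.mp huc (1/2) (by norm_num)
  set δ := min (δ₀/2) L with hδdef
  have hδpos : 0 < δ := lt_min (by linarith) hL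
  have hδL : δ ≤ L := min_le_right _ _
  have hδlt : δ < δ₀ := lt_of_le_of_lt (min_le_left _ _) (by linarith)
  -- near estimate for derivative
  have hnear : ∀ t u : ℝ, |u - t| ≤ δ → ‖deriv γ u - deriv γ t‖ ≤ 1/2 := by
    intro t u hut
    set k := ⌊t / L⌋ with hk
    have ht1 : 0 ≤ t - k * L := Int.sub_floor_div_mul_nonneg t hL
    have ht2 : t - k * L < L := Int.sub_floor_div_mul_lt t hL
    have htm : t - k * L ∈ Set.Icc (-L) (2*L) := ⟨by linarith, by linarith⟩
    have hum : u - k * L ∈ Set.Icc (-L) (2*L) := by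
      have h1 : |u - t| ≤ L := le_trans hut hδL
      have := abs_le.mp h1
      constructor <;> nlinarith [this.1, this.2]
    have hdist : dist (u - k * L) (t - k * L) < δ₀ := by
      rw [Real.dist_eq]
      have : u - k * L - (t - k * L) = u - t := by ring
      rw [this]
      exact lt_of_le_of_lt hut hδlt
    have := hδ₀' _ hum _ htm hdist
    rw [dist_eq_norm] at this
    rw [← hperd.sub_int_mul_eq k, ← hperd.sub_int_mul_eq (x := t) k]
    exact le_of_lt this
  -- near chord estimate
  have hchord : ∀ t s : ℝ, t ≤ s → s - t ≤ δ → (s - t) / 2 ≤ ‖γ s - γ t‖ := by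
    intro t s hts hst
    set v := deriv γ t with hv
    have hFTC : ∫ u in t..s, deriv γ u = γ s - γ t :=
      intervalIntegral.integral_deriv_eq_sub (fun x _ => hdiff x)
        (hcd.intervalIntegrable t s)
    have hswap : (innerSL ℝ v) (∫ u in t..s, deriv γ u)
        = ∫ u in t..s, (innerSL ℝ v) (deriv γ u) :=
      ((innerSL ℝ v).intervalIntegral_comp_comm (hcd.intervalIntegrable t s)).symm
    have hlow : ∀ u ∈ Set.Icc t s, (1:ℝ)/2 ≤ (innerSL ℝ v) (deriv γ u) := by
      intro u hu
      have h1 : ‖deriv γ u - v‖ ≤ 1/2 := by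
        apply hnear t u
        rw [abs_of_nonneg (by linarith [hu.1])]
        linarith [hu.2]
      have h2 : (inner ℝ v (deriv γ u) : ℝ) = inner ℝ v v + inner ℝ v (deriv γ u - v) := by
        conv_lhs => rw [show deriv γ u = v + (deriv γ u - v) by abel]
        rw [inner_add_right]
      have h3 : (inner ℝ v v : ℝ) = 1 := by
        rw [real_inner_self_eq_norm_sq, hunit t]; norm_num
      have h4 : |(inner ℝ v (deriv γ u - v) : ℝ)| ≤ 1/2 := by
        calc |(inner ℝ v (deriv γ u - v) : ℝ)| ≤ ‖v‖ * ‖deriv γ u - v‖ := abs_real_inner_le_norm _ _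
        _ ≤ 1 * (1/2) := by
            rw [hunit t]
            exact mul_le_mul_of_nonneg_left h1 zero_le_one
        _ = 1/2 := by norm_num
      have h5 := abs_le.mp h4
      simp only [innerSL_apply_apply]
      rw [h2, h3]
      linarith [h5.1]
    have hmono : (s - t) / 2 ≤ ∫ u in t..s, (innerSL ℝ v) (deriv γ u) := by
      have hconst : ∫ _u in t..s, (1:ℝ)/2 = (s - t) / 2 := by
        simp [intervalIntegral.integral_const]; ring
      rw [← hconst]
      apply intervalIntegral.integral_mono_on hts
        (intervalIntegrable_const)
        (((innerSL ℝ v).continuous.comp hcd).intervalIntegrable t s)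
        (fun u hu => hlow u hu)
    have hCS : (innerSL ℝ v) (γ s - γ t) ≤ ‖γ s - γ t‖ := by
      calc (innerSL ℝ v) (γ s - γ t) = (inner ℝ v (γ s - γ t) : ℝ) := rfl
      _ ≤ ‖v‖ * ‖γ s - γ t‖ := real_inner_le_norm _ _
      _ = ‖γ s - γ t‖ := by rw [hunit t, one_mul]
    calc (s - t)/2 ≤ ∫ u in t..s, (innerSL ℝ v) (deriv γ u) := hmono
    _ = (innerSL ℝ v) (γ s - γ t) := by rw [← hswap, hFTC]
    _ ≤ ‖γ s - γ t‖ := hCS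
  -- symmetric near chord estimate
  have hboth : ∀ s t : ℝ, |s - t| ≤ δ → |s - t| / 2 ≤ ‖γ s - γ t‖ := by
    intro s t h
    rcases le_total t s with hts | hst
    · rw [abs_of_nonneg (by linarith)]
      exact hchord t s hts (by rwa [abs_of_nonneg (by linarith)] at h)
    · rw [abs_of_nonpos (by linarith), norm_sub_rev]
      have h2 : t - s ≤ δ := by
        rw [abs_of_nonpos (by linarith)] at h; linarith
      have := hchord s t hst h2
      linarith
  -- far part: compactness
  set K := (Set.Icc (0:ℝ) L ×ˢ Set.Icc (0:ℝ) L) ∩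
      {q : ℝ × ℝ | δ ≤ min |q.1 - q.2| (L - |q.1 - q.2|)} with hKdef
  have hgcont : Continuous (fun q : ℝ × ℝ => min |q.1 - q.2| (L - |q.1 - q.2|)) :=
    ((continuous_fst.sub continuous_snd).abs).min
      (continuous_const.sub (continuous_fst.sub continuous_snd).abs)
  have hKc : IsCompact K :=
    (isCompact_Icc.prod isCompact_Icc).inter_right (isClosed_le continuous_const hgcont)
  have hγL : γ L = γ 0 := by rw [← hper 0, zero_add]
  have hFpos : ∀ q ∈ K, 0 < ‖γ q.1 - γ q.2‖ := by
    rintro ⟨s, t⟩ ⟨⟨hs, ht⟩, hdmem⟩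
    replace hs : s ∈ Set.Icc (0:ℝ) L := hs
    replace ht : t ∈ Set.Icc (0:ℝ) L := ht
    replace hdmem : δ ≤ min |s - t| (L - |s - t|) := hdmem
    show 0 < ‖γ s - γ t‖
    rw [norm_pos_iff, sub_ne_zero]
    intro heq
    have h1 : 0 < |s - t| := lt_of_lt_of_le hδpos (le_trans hdmem (min_le_left _ _))
    have h2 : |s - t| < L := by
      have := le_trans hdmem (min_le_right _ _); linarith
    rcases eq_or_lt_of_le hs.2 with hsL | hsL
    · rcases eq_or_lt_of_le ht.2 with htL | htL
      · rw [hsL, htL] at h1; simp at h1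
      · have heq0 : γ t = γ 0 := by rw [← heq, hsL]; exact hγL
        have := hinj ⟨ht.1, htL⟩ ⟨le_refl 0, hL⟩ heq0
        rw [this, hsL, sub_zero, abs_of_nonneg hL.le] at h2
        exact lt_irrefl L h2
    · rcases eq_or_lt_of_le ht.2 with htL | htL
      · have heq0 : γ s = γ 0 := by rw [heq, htL]; exact hγL
        have := hinj ⟨hs.1, hsL⟩ ⟨le_refl 0, hL⟩ heq0
        rw [this, htL, zero_sub, abs_neg, abs_of_nonneg hL.le] at h2
        exact lt_irrefl L h2
      · have := hinj ⟨hs.1, hsL⟩ ⟨ht.1, htL⟩ heq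
        rw [this] at h1; simp at h1
  obtain ⟨c₂, hc₂pos, hc₂⟩ : ∃ c₂ > 0, ∀ q ∈ K, c₂ ≤ ‖γ q.1 - γ q.2‖ := by
    rcases K.eq_empty_or_nonempty with hK | hK
    · exact ⟨1, one_pos, by rw [hK]; intro q hq; exact absurd hq (Set.notMem_empty q)⟩
    · obtain ⟨q₀, hq₀K, hq₀⟩ := hKc.exists_isMinOn hK
        (((hcont.comp continuous_fst).sub (hcont.comp continuous_snd)).norm.continuousOn)
      exact ⟨‖γ q₀.1 - γ q₀.2‖, hFpos q₀ hq₀K, fun q hq => hq₀ hq⟩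
  -- assemble
  refine ⟨min (1/2) (c₂ / L), lt_min (by norm_num) (div_pos hc₂pos hL), ?_⟩
  intro s hs t ht
  set d := min |s - t| (L - |s - t|) with hd
  have habsL : |s - t| ≤ L := abs_le.mpr ⟨by linarith [hs.1, hs.2, ht.1, ht.2],
    by linarith [hs.1, hs.2, ht.1, ht.2]⟩
  have hd0 : 0 ≤ d := le_min (abs_nonneg _) (by linarith)
  have hdL : d ≤ L := le_trans (min_le_right _ _) (by linarith [abs_nonneg (s - t)])
  rcases le_or_gt δ d with hfar | hnear2
  · have hqK : (s, t) ∈ K := ⟨Set.mk_mem_prod hs ht, hfar⟩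
    calc min (1/2) (c₂/L) * d ≤ (c₂/L) * L :=
          mul_le_mul (min_le_right _ _) hdL hd0 (div_nonneg hc₂pos.le hL.le)
    _ = c₂ := div_mul_cancel₀ _ (ne_of_gt hL)
    _ ≤ ‖γ s - γ t‖ := hc₂ (s, t) hqK
  · have hhalf : d / 2 ≤ ‖γ s - γ t‖ := by
      rcases le_total |s - t| (L - |s - t|) with hcase | hcase
      · have hdeq : d = |s - t| := min_eq_left hcase
        rw [hdeq]
        exact hboth s t (by rw [← hdeq]; exact hnear2.le)
      · have hdeq : d = L - |s - t| := min_eq_right hcase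
        rcases le_total t s with hts | hst
        · have habs : |s - t| = s - t := abs_of_nonneg (by linarith)
          have h3 : |(t + L) - s| = d := by
            rw [hdeq, habs, abs_of_nonneg (by linarith [habsL, habs])]
            ring
          have h4 := hboth (t + L) s (by rw [h3]; exact hnear2.le)
          rw [h3, hper t, norm_sub_rev] at h4
          exact h4
        · have habs : |s - t| = t - s := by rw [abs_of_nonpos (by linarith), neg_sub]
          have h3 : |(s + L) - t| = d := by
            rw [hdeq, habs, abs_of_nonneg (by linarith [habsL, habs])]
            ring
          have h4 := hboth (s + L) t (by rw [h3]; exact hnear2.le)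
          rw [h3, hper s] at h4
          exact h4
    calc min (1/2) (c₂/L) * d ≤ (1/2) * d := mul_le_mul_of_nonneg_right (min_le_left _ _) hd0
    _ = d / 2 := by ring
    _ ≤ ‖γ s - γ t‖ := hhalf

theorem log_chord_integrable
    (L : ℝ) (hL : 0 < L) (γ : ℝ → EuclideanSpace ℝ (Fin 3))
    (hC1 : ContDiff ℝ 1 γ)
    (hper : ∀ s, γ (s + L) = γ s)
    (hunit : ∀ s, ‖deriv γ s‖ = 1)
    (hinj : Set.InjOn γ (Set.Ico 0 L)) :
    IntegrableOn (fun q : ℝ × ℝ => Real.log ‖γ q.1 - γ q.2‖)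
      (Set.Icc 0 L ×ˢ Set.Icc 0 L) volume := by
  obtain ⟨c, hc, hchord⟩ := chord_lower L hL γ hC1 hper hunit hinj
  have hdiff : Differentiable ℝ γ := hC1.differentiable one_ne_zero
  have hcont : Continuous γ := hdiff.continuous
  -- Lipschitz bound
  have hlip : ∀ s t : ℝ, ‖γ s - γ t‖ ≤ |s - t| := by
    have hl : LipschitzWith 1 γ := by
      apply lipschitzWith_of_nnnorm_deriv_le hdiff
      intro x
      rw [← NNReal.coe_le_coe, coe_nnnorm, NNReal.coe_one, hunit x]
    intro s t
    have := hl.dist_le_mul s t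
    simpa [dist_eq_norm, Real.dist_eq] using this
  -- dominating function
  set f₁ : ℝ → ℝ := fun u => |Real.log (|u|)| with hf₁def
  set f₂ : ℝ → ℝ := fun u => |Real.log (abs (L - |u|))| with hf₂def
  have hf₁m : Measurable f₁ := (Real.measurable_log.comp measurable_abs).abs
  have hf₂m : Measurable f₂ :=
    (Real.measurable_log.comp ((measurable_const.sub measurable_abs).abs)).abs
  have hf₁i : IntegrableOn f₁ (Set.Icc (-L) L) volume := by
    have h1 := (intervalIntegrable_log_abs (-L) L).norm
    have h2 : IntervalIntegrable f₁ volume (-L) L := by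
      apply h1.congr_ae
      filter_upwards with x
      simp [hf₁def, Real.norm_eq_abs]
    rw [intervalIntegrable_iff_integrableOn_Icc_of_le (by linarith)] at h2
    exact h2
  have hf₂i : IntegrableOn f₂ (Set.Icc (-L) L) volume := by
    have hsplit : Set.Icc (-L) L = Set.Icc (-L) 0 ∪ Set.Icc 0 L := by
      rw [Set.Icc_union_Icc_eq_Icc (by linarith) (by linarith)]
    rw [hsplit]
    apply IntegrableOn.union
    · -- on Icc (-L) 0, f₂ u = |log |L + u|| = f₁ (u + L)
      have h1 := (intervalIntegrable_log_abs 0 L).norm.comp_add_right L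
      have h2 : IntegrableOn (fun u => ‖Real.log |u + L|‖) (Set.Icc (-L) 0) volume := by
        have h3 : IntervalIntegrable (fun u => ‖Real.log |u + L|‖) volume (-L) 0 := by
          simpa using h1
        rw [intervalIntegrable_iff_integrableOn_Icc_of_le (by linarith)] at h3
        exact h3
      apply h2.congr_fun _ measurableSet_Icc
      intro u hu
      have : |u| = -u := abs_of_nonpos hu.2
      simp [hf₂def, this, Real.norm_eq_abs, sub_neg_eq_add, add_comm]
    · -- on Icc 0 L, f₂ u = |log |L - u||
      have h1 := ((intervalIntegrable_log_abs 0 L).norm.comp_sub_left L).symm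
      have h2 : IntegrableOn (fun u => ‖Real.log |L - u|‖) (Set.Icc 0 L) volume := by
        have h3 : IntervalIntegrable (fun u => ‖Real.log |L - u|‖) volume 0 L := by
          simpa using h1
        rw [intervalIntegrable_iff_integrableOn_Icc_of_le (by linarith)] at h3
        exact h3
      apply h2.congr_fun _ measurableSet_Icc
      intro u hu
      have : |u| = u := abs_of_nonneg hu.1
      simp [hf₂def, this, Real.norm_eq_abs]
  have hsq₁ := square_integrable L hL f₁ hf₁m hf₁i
  have hsq₂ := square_integrable L hL f₂ hf₂m hf₂i
  have hconst : IntegrableOn (fun _ : ℝ × ℝ => |Real.log c| + |Real.log L|)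
      (Set.Icc 0 L ×ˢ Set.Icc 0 L) volume := by
    apply (integrableOn_const_iff (by simp)).mpr
    right
    exact (isCompact_Icc.prod isCompact_Icc).measure_lt_top
  have hg_int : IntegrableOn
      (fun q : ℝ × ℝ => (|Real.log c| + |Real.log L|) + (f₁ (q.1 - q.2) + f₂ (q.1 - q.2)))
      (Set.Icc 0 L ×ˢ Set.Icc 0 L) volume := hconst.add (hsq₁.add hsq₂)
  apply Integrable.mono' hg_int
  · exact (Real.measurable_log.comp
      (((hcont.comp continuous_fst).sub (hcont.comp continuous_snd)).measurable.norm)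
      ).aestronglyMeasurable
  · filter_upwards [ae_restrict_mem (measurableSet_Icc.prod measurableSet_Icc)] with q hq
    obtain ⟨hs, ht⟩ := hq
    set x := ‖γ q.1 - γ q.2‖ with hx
    set a := |q.1 - q.2| with ha
    set d := min a (L - a) with hd
    have haL : a ≤ L := abs_le.mpr ⟨by linarith [hs.1, hs.2, ht.1, ht.2],
      by linarith [hs.1, hs.2, ht.1, ht.2]⟩
    have hxa : x ≤ a := hlip q.1 q.2
    have hxL : x ≤ L := le_trans hxa haL
    have hcd : c * d ≤ x := hchord q.1 hs q.2 ht
    have hfnn : (0:ℝ) ≤ f₁ (q.1 - q.2) + f₂ (q.1 - q.2) := by positivity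
    rw [Real.norm_eq_abs]
    by_cases hx0 : x = 0
    · rw [hx0, Real.log_zero, abs_zero]
      positivity
    · have hxpos : 0 < x := lt_of_le_of_ne (norm_nonneg _) (Ne.symm hx0)
      have hdpos : 0 < d := by
        rcases lt_or_ge 0 d with h | h
        · exact h
        · exfalso
          rcases min_cases a (L - a) with ⟨heq, _⟩ | ⟨heq, _⟩
          · -- d = a ≤ 0 so a = 0, x ≤ 0
            have ha0 : a = 0 := le_antisymm (heq ▸ h) (abs_nonneg _)
            rw [ha0] at hxa
            linarith
          · -- d = L - a ≤ 0, a = L, endpoints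
            have haL' : a = L := le_antisymm haL (by rw [hd, heq] at h; linarith)
            have hx0' : x = 0 := by
              rcases abs_eq (le_of_lt hL) |>.mp (ha ▸ haL' : |q.1 - q.2| = L) with h1 | h1
              · have hq1 : q.1 = L := by linarith [hs.2, ht.1]
                have hq2 : q.2 = 0 := by linarith [hs.2, ht.1]
                rw [hx, hq1, hq2, show γ L = γ 0 by rw [← hper 0, zero_add], sub_self, norm_zero]
              · have hq1 : q.1 = 0 := by linarith [ht.2, hs.1]
                have hq2 : q.2 = L := by linarith [ht.2, hs.1]
                rw [hx, hq1, hq2, show γ L = γ 0 by rw [← hper 0, zero_add], sub_self, norm_zero]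
            exact hx0 hx0'
      have hapos : 0 < a := lt_of_lt_of_le hdpos (min_le_left _ _)
      have hLapos : 0 < L - a := lt_of_lt_of_le hdpos (min_le_right _ _)
      -- |log x| ≤ |log (c*d)| + |log L|
      have hb1 : |Real.log x| ≤ |Real.log (c * d)| + |Real.log L| := by
        rcases le_or_gt 0 (Real.log x) with h | h
        · rw [abs_of_nonneg h]
          have : Real.log x ≤ Real.log L := Real.log_le_log hxpos hxL
          calc Real.log x ≤ Real.log L := this
          _ ≤ |Real.log L| := le_abs_self _
          _ ≤ |Real.log (c * d)| + |Real.log L| := le_add_of_nonneg_left (abs_nonneg _)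
        · rw [abs_of_neg h]
          have h2 : Real.log (c * d) ≤ Real.log x :=
            Real.log_le_log (by positivity) hcd
          calc -Real.log x ≤ -Real.log (c * d) := by linarith
          _ ≤ |Real.log (c * d)| := neg_le_abs _
          _ ≤ |Real.log (c * d)| + |Real.log L| := le_add_of_nonneg_right (abs_nonneg _)
      have hb2 : |Real.log (c * d)| ≤ |Real.log c| + |Real.log d| := by
        rw [Real.log_mul (ne_of_gt hc) (ne_of_gt hdpos)]
        exact abs_add_le _ _
      have hb3 : |Real.log d| ≤ |Real.log a| + |Real.log (L - a)| := by
        rcases min_cases a (L - a) with ⟨heq, _⟩ | ⟨heq, _⟩ <;> rw [hd, heq]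
        · have := abs_nonneg (Real.log (L - a)); linarith
        · have := abs_nonneg (Real.log a); linarith
      have hg1 : f₁ (q.1 - q.2) = |Real.log a| := rfl
      have hg2 : f₂ (q.1 - q.2) = |Real.log (L - a)| := by
        rw [hf₂def]
        simp only []
        rw [abs_of_nonneg (by linarith : (0:ℝ) ≤ L - a)]
      rw [hg1, hg2]
      linarith
end

section
/- Let L > 0 and let γ : ℝ → ℝ³ be continuously differentiable and L-periodic with ‖γ'(s)‖ = 1 for all s, and injective on [0, L). Then for every p with −1 < p < 0, the function (s, t) ↦ ‖γ(s) − γ(t)‖^p is Lebesgue-integrable on [0, L] × [0, L], so the p-th mean chord integral ∫₀^L ∫₀^L ‖γ(s) − γ(t)‖^p ds dt is a finite positive number. -/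
open MeasureTheory Real Set

private lemma aux_local (L : ℝ) (hL : 0 < L) (γ : ℝ → EuclideanSpace ℝ (Fin 3))
    (hC1 : ContDiff ℝ 1 γ) (hper : ∀ s, γ (s + L) = γ s)
    (hunit : ∀ s, ‖deriv γ s‖ = 1) :
    ∃ δ : ℝ, 0 < δ ∧ δ ≤ L/3 ∧ ∀ s t : ℝ, |s - t| ≤ δ → |s - t|/2 ≤ ‖γ s - γ t‖ := by
  have hdiff : Differentiable ℝ γ := hC1.differentiable one_ne_zero
  have hcont' : Continuous (deriv γ) := hC1.continuous_deriv le_rfl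
  have hper' : Function.Periodic (deriv γ) L := by
    intro x
    rw [← deriv_comp_add_const γ L x]
    congr 1
    funext y
    exact hper y
  have key : ∃ δ : ℝ, 0 < δ ∧ δ ≤ min 1 (L/3) ∧
      ∀ x y : ℝ, |y| ≤ δ → ‖deriv γ (x + y) - deriv γ x‖ ≤ 1/2 := by
    set φ : ℝ × ℝ → ℝ := fun q => ‖deriv γ (q.1 + q.2) - deriv γ q.1‖ with hφ
    have hφc : Continuous φ := by fun_prop
    have hK : IsCompact (Set.Icc (0:ℝ) L ×ˢ Set.Icc (-1:ℝ) 1) :=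
      (isCompact_Icc).prod isCompact_Icc
    have huc := hK.uniformContinuousOn_of_continuous hφc.continuousOn
    rw [Metric.uniformContinuousOn_iff] at huc
    obtain ⟨δ₀, hδ₀, hd⟩ := huc (1/2) (by norm_num)
    refine ⟨min (δ₀/2) (min 1 (L/3)), ?_, min_le_right _ _, ?_⟩
    · exact lt_min (by linarith) (lt_min one_pos (by linarith))
    intro x y hy
    have hy1 : |y| ≤ 1 := hy.trans ((min_le_right _ _).trans (min_le_left _ _))
    have hyδ : |y| < δ₀ := lt_of_le_of_lt (hy.trans (min_le_left _ _)) (by linarith)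
    set k : ℤ := ⌊x / L⌋ with hk
    set x₀ : ℝ := x - k * L with hx₀
    have hx₀mem : x₀ ∈ Set.Icc (0:ℝ) L := by
      constructor
      · have := Int.floor_le (x / L)
        rw [hx₀]
        have : (k:ℝ) * L ≤ x := by
          rw [hk]
          calc (⌊x / L⌋ : ℝ) * L ≤ (x / L) * L := by
                exact mul_le_mul_of_nonneg_right (Int.floor_le _) hL.le
            _ = x := by field_simp
        linarith
      · have : x / L < k + 1 := Int.lt_floor_add_one (x / L)
        have : x < (k + 1) * L := by
          calc x = (x / L) * L := by field_simp
            _ < ((k:ℝ) + 1) * L := by exact mul_lt_mul_of_pos_right this hL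
        rw [hx₀]; nlinarith
    have e1 : deriv γ (x + y) = deriv γ (x₀ + y) := by
      have : x + y = (x₀ + y) + (k : ℝ) * L := by rw [hx₀]; ring
      rw [this, hper'.int_mul k (x₀ + y)]
    have e2 : deriv γ x = deriv γ x₀ := by
      have : x = x₀ + (k : ℝ) * L := by rw [hx₀]; ring
      rw [this, hper'.int_mul k x₀]
    have hmem1 : (x₀, y) ∈ Set.Icc (0:ℝ) L ×ˢ Set.Icc (-1:ℝ) 1 := by
      refine ⟨hx₀mem, ?_⟩
      simp only [Set.mem_Icc]
      constructor <;> [linarith [abs_le.mp hy1]; linarith [abs_le.mp hy1]]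
    have hmem2 : (x₀, (0:ℝ)) ∈ Set.Icc (0:ℝ) L ×ˢ Set.Icc (-1:ℝ) 1 := by
      refine ⟨hx₀mem, by simp⟩
    have hdist : dist ((x₀, y) : ℝ × ℝ) (x₀, 0) < δ₀ := by
      rw [Prod.dist_eq]
      simp only [Real.dist_eq, sub_zero, sub_self, abs_zero]
      exact max_lt hδ₀ hyδ
    have := hd _ hmem1 _ hmem2 hdist
    have hφ0 : φ (x₀, 0) = 0 := by simp [hφ]
    rw [Real.dist_eq, hφ0, sub_zero] at this
    have : φ (x₀, y) ≤ 1/2 := (le_abs_self _).trans this.le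
    rw [e1, e2]
    simpa [hφ] using this
  obtain ⟨δ, hδpos, hδle, hosc⟩ := key
  refine ⟨δ, hδpos, hδle.trans (min_le_right _ _), ?_⟩
  have main : ∀ t s : ℝ, t ≤ s → s - t ≤ δ → (s - t)/2 ≤ ‖γ s - γ t‖ := by
    intro t s hts hsd
    have hftc : ∫ u in t..s, deriv γ u = γ s - γ t :=
      intervalIntegral.integral_deriv_eq_sub (fun u _ => hdiff u)
        (hcont'.intervalIntegrable t s)
    have hinner : ∫ u in t..s, (inner ℝ (deriv γ t) (deriv γ u) : ℝ)
        = inner ℝ (deriv γ t) (γ s - γ t) := by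
      rw [← hftc]
      have := ((innerSL ℝ (deriv γ t)).intervalIntegral_comp_comm
        (hcont'.intervalIntegrable t s (μ := volume))).symm
      exact this.symm ▸ rfl
    have hmono : (s - t) * (1/2) ≤ ∫ u in t..s, (inner ℝ (deriv γ t) (deriv γ u) : ℝ) := by
      have h1 : ∀ u ∈ Set.Icc t s, (1/2 : ℝ) ≤ (inner ℝ (deriv γ t) (deriv γ u) : ℝ) := by
        intro u hu
        have hosc' : ‖deriv γ u - deriv γ t‖ ≤ 1/2 := by
          have : u = t + (u - t) := by ring
          rw [this]
          exact hosc t (u - t) (by rw [abs_le]; constructor <;>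
            [linarith [hu.1]; linarith [hu.2]])
        have : (inner ℝ (deriv γ t) (deriv γ u) : ℝ)
            = inner ℝ (deriv γ t) (deriv γ t) + inner ℝ (deriv γ t) (deriv γ u - deriv γ t) := by
          rw [← inner_add_right]; congr 1; abel
        rw [this, real_inner_self_eq_norm_sq, hunit t]
        have := abs_real_inner_le_norm (deriv γ t) (deriv γ u - deriv γ t)
        rw [hunit t, one_mul] at this
        have h2 := neg_abs_le (inner ℝ (deriv γ t) (deriv γ u - deriv γ t) : ℝ)
        nlinarith [abs_nonneg (inner ℝ (deriv γ t) (deriv γ u - deriv γ t) : ℝ)]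
      calc (s - t) * (1/2) = ∫ _ in t..s, (1/2 : ℝ) := by
            simp [intervalIntegral.integral_const, smul_eq_mul]
        _ ≤ ∫ u in t..s, (inner ℝ (deriv γ t) (deriv γ u) : ℝ) := by
            apply intervalIntegral.integral_mono_on hts
              (intervalIntegrable_const)
              (Continuous.intervalIntegrable ((innerSL ℝ (deriv γ t)).continuous.comp hcont') t s) h1
    have hcs : (inner ℝ (deriv γ t) (γ s - γ t) : ℝ) ≤ ‖γ s - γ t‖ := by
      have := real_inner_le_norm (deriv γ t) (γ s - γ t)
      rwa [hunit t, one_mul] at this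
    rw [hinner] at hmono
    linarith
  intro s t hst
  rcases le_total t s with h | h
  · have := main t s h (by rw [abs_of_nonneg (by linarith)] at hst; linarith)
    rw [abs_of_nonneg (by linarith)]; linarith
  · have := main s t h (by rw [abs_of_nonpos (by linarith)] at hst; linarith)
    rw [abs_of_nonpos (by linarith), ← norm_neg]
    simpa [neg_sub] using this

private lemma aux_chordarc (L : ℝ) (hL : 0 < L) (γ : ℝ → EuclideanSpace ℝ (Fin 3))
    (hC1 : ContDiff ℝ 1 γ) (hper : ∀ s, γ (s + L) = γ s)
    (hunit : ∀ s, ‖deriv γ s‖ = 1) (hinj : Set.InjOn γ (Set.Ico 0 L)) :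
    ∃ c : ℝ, 0 < c ∧ ∀ s ∈ Set.Icc (0:ℝ) L, ∀ t ∈ Set.Icc (0:ℝ) L,
      c * min |s - t| (L - |s - t|) ≤ ‖γ s - γ t‖ := by
  obtain ⟨δ, hδpos, hδle, hloc⟩ := aux_local L hL γ hC1 hper hunit
  have hcont : Continuous γ := hC1.continuous
  set K : Set (ℝ × ℝ) := {q : ℝ × ℝ | q.1 ∈ Set.Icc (0:ℝ) L ∧ q.2 ∈ Set.Icc (0:ℝ) L ∧
      δ ≤ |q.1 - q.2| ∧ |q.1 - q.2| ≤ L - δ} with hK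
  have hKc : IsCompact K := by
    refine IsCompact.of_isClosed_subset ((isCompact_Icc (a := (0:ℝ)) (b := L)).prod
      (isCompact_Icc (a := (0:ℝ)) (b := L))) ?_ ?_
    · have h1 : K = (Prod.fst ⁻¹' Set.Icc (0:ℝ) L) ∩ (Prod.snd ⁻¹' Set.Icc (0:ℝ) L) ∩
          {q : ℝ × ℝ | δ ≤ |q.1 - q.2|} ∩ {q : ℝ × ℝ | |q.1 - q.2| ≤ L - δ} := by
        ext q; simp only [hK, Set.mem_setOf_eq, Set.mem_inter_iff, Set.mem_preimage]; tauto
      rw [h1]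
      exact (((isClosed_Icc.preimage continuous_fst).inter
        (isClosed_Icc.preimage continuous_snd)).inter
        (isClosed_le continuous_const (continuous_fst.sub continuous_snd).abs)).inter
        (isClosed_le (continuous_fst.sub continuous_snd).abs continuous_const)
    · rintro ⟨a, b⟩ ⟨h1, h2, _, _⟩
      exact ⟨h1, h2⟩
  have hKne : K.Nonempty := by
    refine ⟨(0, L/2), ⟨le_rfl, by linarith⟩, ⟨by linarith, by linarith⟩, ?_, ?_⟩ <;>
      · simp only [abs_of_nonpos (by linarith : (0:ℝ) - L/2 ≤ 0)]; linarith
  have hpos : ∀ q ∈ K, 0 < ‖γ q.1 - γ q.2‖ := by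
    rintro ⟨s, t⟩ ⟨hs, ht, h1, h2⟩
    simp only at h1 h2 ⊢
    have hγL : γ L = γ 0 := by simpa using hper 0
    set s' : ℝ := if s = L then 0 else s with hs'
    set t' : ℝ := if t = L then 0 else t with ht'
    have hgs : γ s' = γ s := by
      rw [hs']; split_ifs with h
      · rw [h, hγL]
      · rfl
    have hgt : γ t' = γ t := by
      rw [ht']; split_ifs with h
      · rw [h, hγL]
      · rfl
    have hs'mem : s' ∈ Set.Ico (0:ℝ) L := by
      rw [hs']; split_ifs with h
      · exact ⟨le_rfl, hL⟩
      · exact ⟨hs.1, lt_of_le_of_ne hs.2 h⟩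
    have ht'mem : t' ∈ Set.Ico (0:ℝ) L := by
      rw [ht']; split_ifs with h
      · exact ⟨le_rfl, hL⟩
      · exact ⟨ht.1, lt_of_le_of_ne ht.2 h⟩
    have hne : s' ≠ t' := by
      rcases eq_or_ne s L with hsl | hsl
      · rcases eq_or_ne t L with htl | htl
        · exfalso; rw [hsl, htl] at h1; simp at h1; linarith
        · simp only [hs', ht', if_pos hsl, if_neg htl]
          intro h
          rw [hsl, ← h, sub_zero, abs_of_nonneg hL.le] at h2
          linarith
      · rcases eq_or_ne t L with htl | htl
        · simp only [hs', ht', if_neg hsl, if_pos htl]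
          intro h
          rw [htl, h, zero_sub, abs_neg, abs_of_nonneg hL.le] at h2
          linarith
        · simp only [hs', ht', if_neg hsl, if_neg htl]
          intro h
          rw [h, sub_self, abs_zero] at h1
          linarith
    have : γ s' ≠ γ t' := fun h => hne (hinj hs'mem ht'mem h)
    rw [hgs, hgt] at this
    rw [norm_pos_iff]
    exact sub_ne_zero_of_ne this
  obtain ⟨q₀, hq₀K, hq₀min⟩ := hKc.exists_isMinOn hKne
    (hcont.comp continuous_fst |>.sub (hcont.comp continuous_snd)).norm.continuousOn
  set ε : ℝ := ‖γ q₀.1 - γ q₀.2‖ with hε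
  have hεpos : 0 < ε := hpos q₀ hq₀K
  refine ⟨min (1/2) (ε/L), lt_min (by norm_num) (div_pos hεpos hL), ?_⟩
  intro s hs t ht
  set m : ℝ := min |s - t| (L - |s - t|) with hm
  have habsle : |s - t| ≤ L := by
    obtain ⟨hs1, hs2⟩ := hs
    obtain ⟨ht1, ht2⟩ := ht
    rw [abs_le]
    constructor <;> linarith
  have hmle : m ≤ L := (min_le_left _ _).trans habsle
  have hc12 : min (1/2) (ε/L) ≤ 1/2 := min_le_left _ _
  have hcε : min (1/2) (ε/L) ≤ ε/L := min_le_right _ _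
  have hcpos : (0:ℝ) < min (1/2) (ε/L) := lt_min (by norm_num) (div_pos hεpos hL)
  have hmnn : 0 ≤ m := le_min (abs_nonneg _) (by linarith)
  rcases le_or_gt |s - t| δ with h | h
  · have := hloc s t h
    have hmabs : m ≤ |s - t| := min_le_left _ _
    calc min (1/2) (ε/L) * m ≤ (1/2) * |s - t| := by
          apply mul_le_mul hc12 hmabs hmnn (by norm_num)
      _ ≤ ‖γ s - γ t‖ := by linarith
  · rcases le_or_gt (L - |s - t|) δ with h2 | h2
    · have hmwrap : m ≤ L - |s - t| := min_le_right _ _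
      rcases le_total s t with hst | hst
      · have habs : |s - t| = t - s := by rw [abs_of_nonpos (by linarith)]; ring
        have : |(s + L) - t| ≤ δ := by
          rw [abs_of_nonneg (by rw [habs] at habsle; linarith)]
          rw [habs] at h2; linarith
        have := hloc (s + L) t this
        rw [hper s] at this
        rw [abs_of_nonneg (by rw [habs] at habsle; linarith)] at this
        calc min (1/2) (ε/L) * m ≤ (1/2) * (L - |s - t|) := by
              apply mul_le_mul hc12 hmwrap hmnn (by norm_num)
          _ ≤ ‖γ s - γ t‖ := by linarith
      · have habs : |s - t| = s - t := by rw [abs_of_nonneg (by linarith)]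
        have : |(t + L) - s| ≤ δ := by
          rw [abs_of_nonneg (by rw [habs] at habsle; linarith)]
          rw [habs] at h2; linarith
        have := hloc (t + L) s this
        rw [hper t] at this
        rw [abs_of_nonneg (by rw [habs] at habsle; linarith)] at this
        rw [← norm_neg]
        simp only [neg_sub]
        calc min (1/2) (ε/L) * m ≤ (1/2) * (L - |s - t|) := by
              apply mul_le_mul hc12 hmwrap hmnn (by norm_num)
          _ ≤ ‖γ t - γ s‖ := by linarith
    · have hmemK : ((s, t) : ℝ × ℝ) ∈ K := ⟨hs, ht, le_of_lt h, le_of_lt (by linarith)⟩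
      have := hq₀min hmemK
      calc min (1/2) (ε/L) * m ≤ (ε/L) * L := by
            apply mul_le_mul hcε hmle hmnn (le_of_lt (div_pos hεpos hL))
        _ = ε := by field_simp
        _ ≤ ‖γ s - γ t‖ := this

private lemma aux_g_int (L : ℝ) (hL : 0 < L) (p : ℝ) (hp : p ∈ Set.Ioo (-1 : ℝ) 0) :
    IntegrableOn (fun u : ℝ => |u| ^ p + abs (L - |u|) ^ p) (Set.Icc (-L) L) volume := by
  have hrp : Measurable fun x : ℝ => x ^ p := by measurability
  have hmeas : Measurable fun u : ℝ => |u| ^ p + abs (L - |u|) ^ p :=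
    (hrp.comp measurable_abs).add
      (hrp.comp ((measurable_const.sub measurable_abs).abs))
  have base : IntegrableOn (fun x : ℝ => x ^ p) (Ioo 0 L) volume :=
    (intervalIntegral.integrableOn_Ioo_rpow_iff hL).mpr hp.1
  have A1 : IntegrableOn (fun x : ℝ => |x| ^ p) (Ioo 0 L) volume :=
    base.congr_fun (fun x hx => by rw [abs_of_pos hx.1]) measurableSet_Ioo
  have hA1m : Measurable fun x : ℝ => |x| ^ p := hrp.comp measurable_abs
  have B1 : Integrable ((Ioo (0:ℝ) L).indicator fun x => |x| ^ p) volume := by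
    rwa [integrable_indicator_iff measurableSet_Ioo]
  have B2 : Integrable (fun x => ((Ioo (0:ℝ) L).indicator fun y => |y| ^ p) (-x)) volume :=
    B1.comp_neg
  have B2' : Integrable ((Ioo (-L) (0:ℝ)).indicator fun x => |x| ^ p) volume := by
    refine B2.congr (Filter.Eventually.of_forall fun x => ?_)
    show ((Ioo (0:ℝ) L).indicator fun y => |y| ^ p) (-x)
        = ((Ioo (-L) (0:ℝ)).indicator fun y => |y| ^ p) x
    by_cases h : x ∈ Ioo (-L) (0:ℝ)
    · rw [Set.indicator_of_mem h, Set.indicator_of_mem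
        (Set.mem_Ioo.mpr ⟨by linarith [h.2], by linarith [h.1]⟩ : -x ∈ Ioo (0:ℝ) L), abs_neg]
    · rw [Set.indicator_of_notMem h, Set.indicator_of_notMem]
      intro hc
      exact h ⟨by linarith [hc.2], by linarith [hc.1]⟩
  have A2 : IntegrableOn (fun x : ℝ => |x| ^ p) (Ioo (-L) 0) volume := by
    rwa [integrable_indicator_iff measurableSet_Ioo] at B2'
  have C1 : Integrable (fun x => ((Ioo (0:ℝ) L).indicator fun y => |y| ^ p) (L - x)) volume := by
    have h0 := (B1.comp_neg).comp_sub_right L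
    refine h0.congr (Filter.Eventually.of_forall fun x => ?_)
    show ((Ioo (0:ℝ) L).indicator fun y => |y| ^ p) (-(x - L))
        = ((Ioo (0:ℝ) L).indicator fun y => |y| ^ p) (L - x)
    congr 1
    ring
  have A3 : IntegrableOn (fun x : ℝ => abs (L - |x|) ^ p) (Ioo 0 L) volume := by
    have : IntegrableOn (fun x => ((Ioo (0:ℝ) L).indicator fun y => |y| ^ p) (L - x))
        (Ioo 0 L) volume := C1.integrableOn
    refine this.congr_fun (fun x hx => ?_) measurableSet_Ioo
    dsimp only
    rw [Set.indicator_of_mem (Set.mem_Ioo.mpr ⟨by linarith [hx.2], by linarith [hx.1]⟩ :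
      L - x ∈ Ioo (0:ℝ) L)]
    rw [abs_of_pos hx.1, abs_of_pos (by linarith [hx.2] : (0:ℝ) < L - x)]
  have C2 : Integrable ((Ioo (0:ℝ) L).indicator fun x => abs (L - |x|) ^ p) volume :=
    (integrable_indicator_iff measurableSet_Ioo).mpr A3
  have A4 : IntegrableOn (fun x : ℝ => abs (L - |x|) ^ p) (Ioo (-L) 0) volume := by
    have C3 := C2.comp_neg
    have C3' : Integrable ((Ioo (-L) (0:ℝ)).indicator fun x => abs (L - |x|) ^ p) volume := by
      refine C3.congr (Filter.Eventually.of_forall fun x => ?_)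
      show ((Ioo (0:ℝ) L).indicator fun y => abs (L - |y|) ^ p) (-x)
          = ((Ioo (-L) (0:ℝ)).indicator fun y => abs (L - |y|) ^ p) x
      by_cases h : x ∈ Ioo (-L) (0:ℝ)
      · rw [Set.indicator_of_mem (Set.mem_Ioo.mpr ⟨by linarith [h.2], by linarith [h.1]⟩ :
          -x ∈ Ioo (0:ℝ) L), Set.indicator_of_mem h, abs_neg]
      · rw [Set.indicator_of_notMem, Set.indicator_of_notMem h]
        intro hc
        exact h ⟨by linarith [hc.2], by linarith [hc.1]⟩
    rwa [integrable_indicator_iff measurableSet_Ioo] at C3'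
  have onIoo : IntegrableOn (fun u : ℝ => |u| ^ p + abs (L - |u|) ^ p)
      (Ioo (-L) 0 ∪ Ioo 0 L) volume := IntegrableOn.union (A2.add A4) (A1.add A3)
  have hnull : volume ((Icc (-L) L) \ (Ioo (-L) 0 ∪ Ioo 0 L)) = 0 := by
    have hsub : (Icc (-L) L) \ (Ioo (-L) 0 ∪ Ioo 0 L) ⊆ ({-L} ∪ {0} ∪ {L} : Set ℝ) := by
      rintro x ⟨⟨h1, h2⟩, h3⟩
      simp only [Set.mem_union, Set.mem_Ioo, not_or, not_and_or, not_lt] at h3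
      simp only [Set.mem_union, Set.mem_singleton_iff]
      rcases lt_trichotomy x 0 with h | h | h
      · left; left
        rcases h3.1 with h' | h' <;> [linarith; linarith]
      · left; right; exact h
      · right
        rcases h3.2 with h' | h' <;> [linarith; linarith]
    refine measure_mono_null hsub (Set.Finite.measure_zero ?_ _)
    exact (((Set.finite_singleton _).union (Set.finite_singleton _)).union
      (Set.finite_singleton _))
  have : IntegrableOn (fun u : ℝ => |u| ^ p + abs (L - |u|) ^ p)
      ((Icc (-L) L) \ (Ioo (-L) 0 ∪ Ioo 0 L)) volume := by
    rw [IntegrableOn, Measure.restrict_eq_zero.mpr hnull]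
    exact integrable_zero_measure
  have hfull : IntegrableOn (fun u : ℝ => |u| ^ p + abs (L - |u|) ^ p)
      ((Ioo (-L) 0 ∪ Ioo 0 L) ∪ ((Icc (-L) L) \ (Ioo (-L) 0 ∪ Ioo 0 L))) volume :=
    onIoo.union this
  refine hfull.mono_set ?_
  intro x hx
  by_cases h : x ∈ Ioo (-L) 0 ∪ Ioo 0 L
  · exact Or.inl h
  · exact Or.inr ⟨hx, h⟩

private lemma aux_dom2 (L : ℝ) (hL : 0 < L) (p : ℝ) (hp : p ∈ Set.Ioo (-1 : ℝ) 0) :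
    IntegrableOn (fun q : ℝ × ℝ => |q.1 - q.2| ^ p + abs (L - |q.1 - q.2|) ^ p)
      (Set.Icc 0 L ×ˢ Set.Icc 0 L) volume := by
  set g : ℝ → ℝ := fun u => |u| ^ p + abs (L - |u|) ^ p with hg
  have hG : Integrable ((Icc (-L) L).indicator g) volume :=
    (integrable_indicator_iff measurableSet_Icc).mpr (aux_g_int L hL p hp)
  have hI : Integrable ((Icc (0:ℝ) L).indicator fun _ => (1:ℝ)) volume := by
    rw [integrable_indicator_iff measurableSet_Icc]
    refine (integrableOn_const_iff (C := (1:ℝ)) (by simp)).mpr (Or.inr ?_)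
    rw [Real.volume_Icc]
    exact ENNReal.ofReal_lt_top
  have hprod : Integrable (fun r : ℝ × ℝ => ((Icc (-L) L).indicator g) r.1 *
      ((Icc (0:ℝ) L).indicator fun _ => (1:ℝ)) r.2) (volume.prod volume) :=
    hG.mul_prod hI
  have hshear : MeasurePreserving (fun q : ℝ × ℝ => (q.1 - q.2, q.2))
      ((volume : Measure ℝ).prod volume) ((volume : Measure ℝ).prod volume) :=
    measurePreserving_sub_prod volume volume
  have hcomp : Integrable (fun q : ℝ × ℝ => ((Icc (-L) L).indicator g) (q.1 - q.2) *
      ((Icc (0:ℝ) L).indicator fun _ => (1:ℝ)) q.2) ((volume : Measure ℝ).prod volume) := by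
    have := (hshear.integrable_comp hprod.aestronglyMeasurable).mpr hprod
    exact this
  rw [← Measure.volume_eq_prod] at hcomp
  have hres := hcomp.integrableOn (s := Set.Icc 0 L ×ˢ Set.Icc 0 L)
  refine hres.congr_fun (fun q hq => ?_) (measurableSet_Icc.prod measurableSet_Icc)
  obtain ⟨hq1, hq2⟩ := hq
  have h1 : q.1 - q.2 ∈ Icc (-L) L := by
    obtain ⟨a1, a2⟩ := hq1
    obtain ⟨b1, b2⟩ := hq2
    exact ⟨by linarith, by linarith⟩
  dsimp only
  rw [Set.indicator_of_mem h1, Set.indicator_of_mem hq2, mul_one]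

theorem negative_power_chord_integrable
    (L : ℝ) (hL : 0 < L) (γ : ℝ → EuclideanSpace ℝ (Fin 3))
    (hC1 : ContDiff ℝ 1 γ)
    (hper : ∀ s, γ (s + L) = γ s)
    (hunit : ∀ s, ‖deriv γ s‖ = 1)
    (hinj : Set.InjOn γ (Set.Ico 0 L))
    (p : ℝ) (hp : p ∈ Set.Ioo (-1 : ℝ) 0) :
    IntegrableOn (fun q : ℝ × ℝ => ‖γ q.1 - γ q.2‖ ^ p)
        (Set.Icc 0 L ×ˢ Set.Icc 0 L) volume ∧
      0 < ∫ q in Set.Icc 0 L ×ˢ Set.Icc 0 L, ‖γ q.1 - γ q.2‖ ^ p := by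
  obtain ⟨c, hc, hca⟩ := aux_chordarc L hL γ hC1 hper hunit hinj
  have hγL : γ L = γ 0 := by simpa using hper 0
  have hrp : Measurable fun x : ℝ => x ^ p := by measurability
  have hnormcont : Continuous fun q : ℝ × ℝ => ‖γ q.1 - γ q.2‖ := by
    have := hC1.continuous
    fun_prop
  have hfmeas : AEStronglyMeasurable (fun q : ℝ × ℝ => ‖γ q.1 - γ q.2‖ ^ p)
      (volume.restrict (Set.Icc 0 L ×ˢ Set.Icc 0 L)) :=
    (hrp.comp hnormcont.measurable).aestronglyMeasurable
  have hpne : p ≠ 0 := ne_of_lt hp.2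
  -- pointwise bound
  have hbound : ∀ q ∈ Set.Icc (0:ℝ) L ×ˢ Set.Icc (0:ℝ) L,
      ‖γ q.1 - γ q.2‖ ^ p ≤ c ^ p * (|q.1 - q.2| ^ p + abs (L - |q.1 - q.2|) ^ p) := by
    rintro ⟨s, t⟩ ⟨hs, ht⟩
    simp only at hs ht ⊢
    set a : ℝ := |s - t| with ha
    have ha0 : 0 ≤ a := abs_nonneg _
    have haL : a ≤ L := by
      obtain ⟨hs1, hs2⟩ := hs
      obtain ⟨ht1, ht2⟩ := ht
      rw [ha, abs_le]
      constructor <;> linarith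
    have habs2 : abs (L - a) = L - a := abs_of_nonneg (by linarith)
    have hrhs_nn : 0 ≤ c ^ p * (a ^ p + abs (L - a) ^ p) := by
      apply mul_nonneg (rpow_nonneg hc.le p)
      exact add_nonneg (rpow_nonneg ha0 p) (rpow_nonneg (abs_nonneg _) p)
    by_cases hm0 : 0 < min a (L - a)
    · have hN := hca s hs t ht
      have hNpos : 0 < ‖γ s - γ t‖ := lt_of_lt_of_le (mul_pos hc hm0) hN
      calc ‖γ s - γ t‖ ^ p ≤ (c * min a (L - a)) ^ p :=
            rpow_le_rpow_of_nonpos (mul_pos hc hm0) hN hp.2.le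
        _ = c ^ p * (min a (L - a)) ^ p := mul_rpow hc.le hm0.le
        _ ≤ c ^ p * (a ^ p + abs (L - a) ^ p) := by
            apply mul_le_mul_of_nonneg_left _ (rpow_nonneg hc.le p)
            rcases min_choice a (L - a) with h | h
            · rw [h]
              have : (0:ℝ) ≤ abs (L - a) ^ p := rpow_nonneg (abs_nonneg _) p
              linarith
            · rw [h, habs2]
              have : (0:ℝ) ≤ a ^ p := rpow_nonneg ha0 p
              linarith
    · -- min = 0, so the curve points coincide
      have hmin : min a (L - a) = 0 := le_antisymm (not_lt.mp hm0) (le_min ha0 (by linarith))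
      have hzero : γ s = γ t := by
        rcases min_choice a (L - a) with h | h
        · rw [h] at hmin
          have : s = t := by
            have := abs_eq_zero.mp hmin
            linarith
          rw [this]
        · rw [h] at hmin
          have haL' : a = L := by linarith
          rcases abs_cases (s - t) with ⟨h1, _⟩ | ⟨h1, _⟩
          · have hsL : s = L := by
              rw [ha] at haL'; rw [h1] at haL'
              obtain ⟨hs1, hs2⟩ := hs
              obtain ⟨ht1, ht2⟩ := ht
              linarith
            have htz : t = 0 := by
              rw [ha, h1] at haL'
              linarith [hsL]
            rw [hsL, htz, hγL]
          · have hsz : s = 0 := by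
              rw [ha, h1] at haL'
              obtain ⟨hs1, hs2⟩ := hs
              obtain ⟨ht1, ht2⟩ := ht
              linarith
            have htL : t = L := by
              rw [ha, h1] at haL'
              linarith [hsz]
            rw [hsz, htL, hγL]
      rw [hzero, sub_self, norm_zero, zero_rpow hpne]
      exact hrhs_nn
  have hdomint : IntegrableOn
      (fun q : ℝ × ℝ => c ^ p * (|q.1 - q.2| ^ p + abs (L - |q.1 - q.2|) ^ p))
      (Set.Icc 0 L ×ˢ Set.Icc 0 L) volume := (aux_dom2 L hL p hp).const_mul _
  have hint : IntegrableOn (fun q : ℝ × ℝ => ‖γ q.1 - γ q.2‖ ^ p)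
      (Set.Icc 0 L ×ˢ Set.Icc 0 L) volume := by
    refine Integrable.mono' hdomint hfmeas ?_
    rw [ae_restrict_iff' (measurableSet_Icc.prod measurableSet_Icc)]
    refine Filter.Eventually.of_forall fun q hq => ?_
    rw [Real.norm_eq_abs, abs_of_nonneg (rpow_nonneg (norm_nonneg _) p)]
    exact hbound q hq
  refine ⟨hint, ?_⟩
  have hnn : 0 ≤ᵐ[volume.restrict (Set.Icc 0 L ×ˢ Set.Icc 0 L)]
      fun q : ℝ × ℝ => ‖γ q.1 - γ q.2‖ ^ p :=
    Filter.Eventually.of_forall fun q => rpow_nonneg (norm_nonneg _) p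
  rw [setIntegral_pos_iff_support_of_nonneg_ae hnn hint]
  have hR : (Set.Icc (0:ℝ) (L/4) ×ˢ Set.Icc (L/2) (3*L/4)) ⊆
      (Function.support fun q : ℝ × ℝ => ‖γ q.1 - γ q.2‖ ^ p) ∩
        (Set.Icc 0 L ×ˢ Set.Icc 0 L) := by
    rintro ⟨s, t⟩ ⟨hs, ht⟩
    simp only [Set.mem_Icc] at hs ht
    have hssq : s ∈ Set.Icc (0:ℝ) L := ⟨hs.1, by linarith [hs.2]⟩
    have htsq : t ∈ Set.Icc (0:ℝ) L := ⟨by linarith [ht.1], by linarith [ht.2]⟩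
    refine ⟨?_, hssq, htsq⟩
    have habs : |s - t| = t - s := by
      rw [abs_of_nonpos (by linarith [hs.2, ht.1])]; ring
    have hmge : L/4 ≤ min |s - t| (L - |s - t|) := by
      rw [habs]
      apply le_min
      · linarith [hs.2, ht.1]
      · linarith [hs.1, ht.2]
    have hN := hca s hssq t htsq
    have hNpos : 0 < ‖γ s - γ t‖ :=
      lt_of_lt_of_le (by nlinarith : (0:ℝ) < c * min |s - t| (L - |s - t|)) hN
    simp only [Function.mem_support]
    exact ne_of_gt (rpow_pos_of_pos hNpos p)
  calc (0 : ENNReal) < volume (Set.Icc (0:ℝ) (L/4) ×ˢ Set.Icc (L/2) (3*L/4)) := by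
        rw [Measure.volume_eq_prod, Measure.prod_prod, Real.volume_Icc, Real.volume_Icc]
        apply ENNReal.mul_pos
        · simp only [ne_eq, ENNReal.ofReal_eq_zero, not_le]
          linarith
        · simp only [ne_eq, ENNReal.ofReal_eq_zero, not_le]
          linarith
    _ ≤ volume ((Function.support fun q : ℝ × ℝ => ‖γ q.1 - γ q.2‖ ^ p) ∩
          (Set.Icc 0 L ×ˢ Set.Icc 0 L)) := measure_mono hR
end

section
/- Let −1 < p < 0. Let η : ℝ → ℝ³ and η_m : ℝ → ℝ³ (m ∈ ℕ) be continuous 1-periodic maps such that η_m → η uniformly, η is injective on [0, 1), and there exist constants c > 0 and δ ∈ (0, 1/2] such that ‖η_m(u) − η_m(v)‖ ≥ c · d₁(u, v) for all m and all u, v with d₁(u, v) ≤ δ. Then the kernels K_m(u, v) = ‖η_m(u) − η_m(v)‖^p are uniformly integrable on [0, 1]²: each K_m is Lebesgue-integrable on [0,1]², and for every ε > 0 there exists δ' > 0 such that for every m and every measurable set A ⊆ [0, 1]² of Lebesgue measure at most δ', one has ∫_A K_m(u, v) du dv ≤ ε. -/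
open MeasureTheory Filter Topology
open scoped ENNReal NNReal

/-- Circular distance on the parameter circle of circumference `L`:
`d_L(s, t) = min_{k ∈ ℤ} |s - t + k L|`. -/
noncomputable def circDist (L s t : ℝ) : ℝ := ⨅ k : ℤ, |s - t + k * L|

lemma circDist_eq_abs {u v : ℝ} (h : |u - v| ≤ 1/2) : circDist 1 u v = |u - v| := by
  unfold circDist
  apply le_antisymm
  · have hb : BddBelow (Set.range fun k : ℤ => |u - v + k * 1|) := by
      refine ⟨0, ?_⟩; rintro x ⟨k, rfl⟩; positivity
    simpa using ciInf_le hb 0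
  · refine le_ciInf fun k => ?_
    rcases eq_or_ne k 0 with rfl | hk
    · simp
    · have h1 : (1:ℝ) ≤ |(k:ℝ)| := by exact_mod_cast Int.one_le_abs hk
      have h2 : |(k:ℝ)| ≤ |u - v + k * 1| + |u - v| := by
        calc |(k:ℝ)| = |(u - v + k * 1) - (u - v)| := by ring_nf
        _ ≤ |u - v + k * 1| + |u - v| := abs_sub _ _
      linarith

lemma lint_rpow_half {p : ℝ} (hp : p ∈ Set.Ioo (-1:ℝ) 0) {R : ℝ} (hR : 0 < R) :
    ∫⁻ x in Set.Icc (0:ℝ) R, ENNReal.ofReal (|x| ^ p) ≤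
      ENNReal.ofReal (R ^ (p+1) / (p+1)) := by
  have hp1 : (-1:ℝ) < p := hp.1
  have hplus : (0:ℝ) < p + 1 := by linarith
  have hEq : Set.EqOn (fun x : ℝ => |x| ^ p) (fun x : ℝ => x ^ p) (Set.Ioc 0 R) := by
    intro x hx; simp [abs_of_pos hx.1]
  have hint : IntegrableOn (fun x : ℝ => |x| ^ p) (Set.Ioc 0 R) := by
    have h0 := intervalIntegral.intervalIntegrable_rpow' (a := 0) (b := R) hp1
    rw [intervalIntegrable_iff_integrableOn_Ioc_of_le hR.le] at h0
    exact h0.congr_fun (fun x hx => (hEq hx).symm) measurableSet_Ioc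
  have hIcc : ∫⁻ x in Set.Icc (0:ℝ) R, ENNReal.ofReal (|x| ^ p) =
      ∫⁻ x in Set.Ioc (0:ℝ) R, ENNReal.ofReal (|x| ^ p) := by
    rw [Measure.restrict_congr_set Ioc_ae_eq_Icc]
  rw [hIcc, ← ofReal_integral_eq_lintegral_ofReal hint
    (Filter.Eventually.of_forall fun x => Real.rpow_nonneg (abs_nonneg x) p)]
  apply ENNReal.ofReal_le_ofReal
  have : ∫ x in Set.Ioc (0:ℝ) R, |x| ^ p = ∫ x in Set.Ioc (0:ℝ) R, x ^ p :=
    setIntegral_congr_fun measurableSet_Ioc hEq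
  rw [this, ← intervalIntegral.integral_of_le hR.le,
    integral_rpow (Or.inl hp1)]
  rw [Real.zero_rpow (by linarith : p + 1 ≠ 0)]
  simp

lemma lint_rpow_abs {p : ℝ} (hp : p ∈ Set.Ioo (-1:ℝ) 0) {w R : ℝ} (hR : 0 < R) :
    ∫⁻ v in Set.Icc (w - R) (w + R), ENNReal.ofReal (|v - w| ^ p) ≤
      ENNReal.ofReal (2 * (R ^ (p+1) / (p+1))) := by
  have htrans : ∫⁻ v in Set.Icc (w - R) (w + R), ENNReal.ofReal (|v - w| ^ p) =
      ∫⁻ x in Set.Icc (-R) R, ENNReal.ofReal (|x| ^ p) := by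
    have h := (measurePreserving_add_right volume w).setLIntegral_comp_preimage_emb
      (MeasurableEquiv.addRight w).measurableEmbedding
      (fun v => ENNReal.ofReal (|v - w| ^ p)) (Set.Icc (w - R) (w + R))
    have hpre : (fun x => x + w) ⁻¹' Set.Icc (w - R) (w + R) = Set.Icc (-R) R := by
      ext x; simp only [Set.mem_preimage, Set.mem_Icc]
      constructor <;> intro hx <;> constructor <;> linarith [hx.1, hx.2]
    rw [← h]
    rw [hpre]
    simp
  rw [htrans]
  have hneg : ∫⁻ x in Set.Icc (-R) (0:ℝ), ENNReal.ofReal (|x| ^ p) =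
      ∫⁻ x in Set.Icc (0:ℝ) R, ENNReal.ofReal (|x| ^ p) := by
    have h := (Measure.measurePreserving_neg (volume : Measure ℝ)).setLIntegral_comp_preimage_emb
      (MeasurableEquiv.neg ℝ).measurableEmbedding
      (fun x => ENNReal.ofReal (|x| ^ p)) (Set.Icc (-R) (0:ℝ))
    have hpre : (Neg.neg : ℝ → ℝ) ⁻¹' Set.Icc (-R) 0 = Set.Icc (0:ℝ) R := by
      ext x; simp only [Set.mem_preimage, Set.mem_Icc]
      constructor <;> intro hx <;> constructor <;> linarith [hx.1, hx.2]
    rw [← h, hpre]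
    simp [abs_neg]
  have hsplit : Set.Icc (-R) R = Set.Icc (-R) (0:ℝ) ∪ Set.Icc (0:ℝ) R :=
    (Set.Icc_union_Icc_eq_Icc (by linarith) (by linarith)).symm
  calc ∫⁻ x in Set.Icc (-R) R, ENNReal.ofReal (|x| ^ p)
      ≤ (∫⁻ x in Set.Icc (-R) (0:ℝ), ENNReal.ofReal (|x| ^ p)) +
        ∫⁻ x in Set.Icc (0:ℝ) R, ENNReal.ofReal (|x| ^ p) := by
        rw [hsplit]; exact lintegral_union_le _ _ _
    _ ≤ ENNReal.ofReal (R ^ (p+1) / (p+1)) + ENNReal.ofReal (R ^ (p+1) / (p+1)) := by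
        rw [hneg]; exact add_le_add (lint_rpow_half hp hR) (lint_rpow_half hp hR)
    _ = ENNReal.ofReal (2 * (R ^ (p+1) / (p+1))) := by
        have hnn : 0 ≤ R ^ (p+1) / (p+1) := by
          have : (0:ℝ) < p + 1 := by linarith [hp.1]
          positivity
        rw [← ENNReal.ofReal_add hnn hnn]; ring_nf

section Core

variable {p c δ : ℝ} {γ : ℝ → EuclideanSpace ℝ (Fin 3)}

lemma core_bound (hp : p ∈ Set.Ioo (-1:ℝ) 0) (hc : 0 < c) (hδ : δ ∈ Set.Ioc (0:ℝ) (1/2))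
    (hγ : Continuous γ)
    (hca : ∀ u v : ℝ, circDist 1 u v ≤ δ → c * circDist 1 u v ≤ ‖γ u - γ v‖)
    (u a R : ℝ) (hR : 0 < R) (s : Set ℝ) (hs : s ⊆ Set.Icc a (a + δ))
    (hsR : ∀ w ∈ Set.Icc a (a + δ),
      (∀ v ∈ Set.Icc a (a + δ), c / 2 * |v - w| ≤ ‖γ u - γ v‖) →
      s ⊆ Set.Icc (w - R) (w + R)) :
    ∫⁻ v in s, ENNReal.ofReal (‖γ u - γ v‖ ^ p) ≤
      ENNReal.ofReal ((c/2) ^ p * (2 * (R ^ (p+1) / (p+1)))) := by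
  have hδ0 := hδ.1
  obtain ⟨w, hw, hwmin⟩ := isCompact_Icc.exists_isMinOn
    (Set.nonempty_Icc.2 (by linarith : a ≤ a + δ))
    ((continuous_const.sub hγ).norm.continuousOn :
      ContinuousOn (fun v => ‖γ u - γ v‖) (Set.Icc a (a + δ)))
  have hlow : ∀ v ∈ Set.Icc a (a + δ), c / 2 * |v - w| ≤ ‖γ u - γ v‖ := by
    intro v hv
    have habs : |v - w| ≤ δ := by
      rw [abs_sub_le_iff]
      constructor <;> [linarith [hv.1, hv.2, hw.1, hw.2]; linarith [hv.1, hv.2, hw.1, hw.2]]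
    have h1 : circDist 1 v w = |v - w| := circDist_eq_abs (by linarith [hδ.2])
    have h2 := hca v w (by rw [h1]; exact habs)
    rw [h1] at h2
    have h4 : ‖γ u - γ w‖ ≤ ‖γ u - γ v‖ := hwmin hv
    have h3 : ‖γ v - γ w‖ ≤ ‖γ u - γ v‖ + ‖γ u - γ w‖ := by
      have : γ v - γ w = (γ u - γ w) - (γ u - γ v) := by abel
      rw [this]
      exact (norm_sub_le _ _).trans (by rw [add_comm])
    linarith
  have hsub := hsR w hw hlow
  have hstep1 : ∫⁻ v in s, ENNReal.ofReal (‖γ u - γ v‖ ^ p) ≤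
      ∫⁻ v in Set.Icc a (a + δ) ∩ Set.Icc (w - R) (w + R),
        ENNReal.ofReal (‖γ u - γ v‖ ^ p) :=
    lintegral_mono_set (Set.subset_inter hs hsub)
  have hstep2 : ∫⁻ v in Set.Icc a (a + δ) ∩ Set.Icc (w - R) (w + R),
        ENNReal.ofReal (‖γ u - γ v‖ ^ p) ≤
      ∫⁻ v in Set.Icc a (a + δ) ∩ Set.Icc (w - R) (w + R),
        ENNReal.ofReal ((c/2) ^ p * |v - w| ^ p) := by
    set t := Set.Icc a (a + δ) ∩ Set.Icc (w - R) (w + R) with ht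
    have htm : MeasurableSet t := (measurableSet_Icc.inter measurableSet_Icc)
    apply lintegral_mono_ae
    have hne : ∀ᵐ v ∂(volume.restrict t), v ≠ w := by
      refine ae_restrict_of_ae ?_
      rw [ae_iff]
      have : {v : ℝ | ¬ v ≠ w} = {w} := by ext x; simp [not_not]
      rw [this]
      exact measure_singleton w
    filter_upwards [hne, ae_restrict_mem htm] with v hvne hvt
    have hvI : v ∈ Set.Icc a (a + δ) := hvt.1
    have hwv : 0 < c / 2 * |v - w| := by
      have : 0 < |v - w| := abs_pos.2 (sub_ne_zero.2 hvne)
      positivity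
    have hnormpos : 0 < ‖γ u - γ v‖ := lt_of_lt_of_le hwv (hlow v hvI)
    apply ENNReal.ofReal_le_ofReal
    calc ‖γ u - γ v‖ ^ p ≤ (c / 2 * |v - w|) ^ p :=
          Real.rpow_le_rpow_of_nonpos hwv (hlow v hvI) hp.2.le
      _ = (c/2) ^ p * |v - w| ^ p :=
          Real.mul_rpow (by positivity) (abs_nonneg _)
  have hstep3 : ∫⁻ v in Set.Icc a (a + δ) ∩ Set.Icc (w - R) (w + R),
        ENNReal.ofReal ((c/2) ^ p * |v - w| ^ p) ≤
      ∫⁻ v in Set.Icc (w - R) (w + R), ENNReal.ofReal ((c/2) ^ p * |v - w| ^ p) :=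
    lintegral_mono_set Set.inter_subset_right
  have hstep4 : ∫⁻ v in Set.Icc (w - R) (w + R), ENNReal.ofReal ((c/2) ^ p * |v - w| ^ p) ≤
      ENNReal.ofReal ((c/2) ^ p * (2 * (R ^ (p+1) / (p+1)))) := by
    have hc2 : (0:ℝ) ≤ (c/2) ^ p := Real.rpow_nonneg (by positivity) p
    calc ∫⁻ v in Set.Icc (w - R) (w + R), ENNReal.ofReal ((c/2) ^ p * |v - w| ^ p)
        = ENNReal.ofReal ((c/2) ^ p) *
            ∫⁻ v in Set.Icc (w - R) (w + R), ENNReal.ofReal (|v - w| ^ p) := by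
          rw [← lintegral_const_mul' _ _ ENNReal.ofReal_ne_top]
          congr 1; ext v
          rw [← ENNReal.ofReal_mul hc2]
      _ ≤ ENNReal.ofReal ((c/2) ^ p) * ENNReal.ofReal (2 * (R ^ (p+1) / (p+1))) :=
          mul_le_mul_right (lint_rpow_abs hp hR) _
      _ = ENNReal.ofReal ((c/2) ^ p * (2 * (R ^ (p+1) / (p+1)))) :=
          (ENNReal.ofReal_mul hc2).symm
  exact hstep1.trans (hstep2.trans (hstep3.trans hstep4))

end Core

section Strip

variable {p c δ : ℝ} {γ : ℝ → EuclideanSpace ℝ (Fin 3)}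

lemma strip_bound (hp : p ∈ Set.Ioo (-1:ℝ) 0) (hc : 0 < c) (hδ : δ ∈ Set.Ioc (0:ℝ) (1/2))
    (hγ : Continuous γ)
    (hca : ∀ u v : ℝ, circDist 1 u v ≤ δ → c * circDist 1 u v ≤ ‖γ u - γ v‖)
    (a R : ℝ) (hR : 0 < R) (S : Set (ℝ × ℝ)) (hSm : MeasurableSet S)
    (hS : S ⊆ Set.Icc 0 1 ×ˢ Set.Icc a (a + δ))
    (hSR : ∀ u, ∀ w ∈ Set.Icc a (a + δ),
      (∀ v ∈ Set.Icc a (a + δ), c / 2 * |v - w| ≤ ‖γ u - γ v‖) →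
      ∀ v, (u, v) ∈ S → v ∈ Set.Icc (w - R) (w + R)) :
    ∫⁻ q in S, ENNReal.ofReal (‖γ q.1 - γ q.2‖ ^ p) ≤
      ENNReal.ofReal ((c/2) ^ p * (2 * (R ^ (p+1) / (p+1)))) := by
  set B := ENNReal.ofReal ((c/2) ^ p * (2 * (R ^ (p+1) / (p+1)))) with hB
  have hmeasK : Measurable fun q : ℝ × ℝ => ENNReal.ofReal (‖γ q.1 - γ q.2‖ ^ p) := by
    apply ENNReal.measurable_ofReal.comp
    exact (((hγ.comp continuous_fst).sub (hγ.comp continuous_snd)).norm.measurable).pow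
      measurable_const
  calc ∫⁻ q in S, ENNReal.ofReal (‖γ q.1 - γ q.2‖ ^ p)
      = ∫⁻ q, S.indicator (fun q : ℝ × ℝ => ENNReal.ofReal (‖γ q.1 - γ q.2‖ ^ p)) q := by
        rw [lintegral_indicator hSm]
    _ = ∫⁻ u, ∫⁻ v, S.indicator
          (fun q : ℝ × ℝ => ENNReal.ofReal (‖γ q.1 - γ q.2‖ ^ p)) (u, v) := by
        rw [Measure.volume_eq_prod]
        exact lintegral_prod _ (hmeasK.indicator hSm).aemeasurable
    _ ≤ ∫⁻ u, (Set.Icc (0:ℝ) 1).indicator (fun _ => B) u := by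
        apply lintegral_mono
        intro u
        have hslicem : MeasurableSet {v : ℝ | (u, v) ∈ S} := measurable_prodMk_left hSm
        have hinner : ∫⁻ v, S.indicator
            (fun q : ℝ × ℝ => ENNReal.ofReal (‖γ q.1 - γ q.2‖ ^ p)) (u, v) =
            ∫⁻ v in {v : ℝ | (u, v) ∈ S}, ENNReal.ofReal (‖γ u - γ v‖ ^ p) := by
          rw [← lintegral_indicator hslicem]
          rfl
        dsimp only
        rw [hinner]
        by_cases hu : u ∈ Set.Icc (0:ℝ) 1
        · rw [Set.indicator_of_mem hu]
          exact core_bound hp hc hδ hγ hca u a R hR _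
            (fun v hv => (hS hv).2) (fun w hw hlow v hv => hSR u w hw hlow v hv)
        · rw [Set.indicator_of_notMem hu]
          have : {v : ℝ | (u, v) ∈ S} = ∅ := by
            ext v; simp only [Set.mem_setOf_eq, Set.mem_empty_iff_false, iff_false]
            intro hv; exact hu (hS hv).1
          rw [this]
          simp
    _ = B := by
        rw [lintegral_indicator_const measurableSet_Icc]
        simp [Real.volume_Icc]

end Strip

theorem uniform_integrability_negative_power_kernels
    (p : ℝ) (hp : p ∈ Set.Ioo (-1 : ℝ) 0)
    (η : ℝ → EuclideanSpace ℝ (Fin 3)) (ηm : ℕ → ℝ → EuclideanSpace ℝ (Fin 3))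
    (hη : Continuous η) (hηm : ∀ m, Continuous (ηm m))
    (hperη : ∀ u, η (u + 1) = η u) (hperηm : ∀ m u, ηm m (u + 1) = ηm m u)
    (hconv : TendstoUniformly ηm η atTop)
    (hinj : Set.InjOn η (Set.Ico 0 1))
    (c δ : ℝ) (hc : 0 < c) (hδ : δ ∈ Set.Ioc (0:ℝ) (1/2))
    (hchordarc : ∀ m, ∀ u v : ℝ, circDist 1 u v ≤ δ →
      c * circDist 1 u v ≤ ‖ηm m u - ηm m v‖) :
    (∀ m, IntegrableOn (fun q : ℝ × ℝ => ‖ηm m q.1 - ηm m q.2‖ ^ p)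
        (Set.Icc 0 1 ×ˢ Set.Icc 0 1) volume) ∧
      ∀ ε > (0:ℝ), ∃ δ' > (0:ℝ), ∀ m, ∀ A : Set (ℝ × ℝ),
        MeasurableSet A → A ⊆ Set.Icc 0 1 ×ˢ Set.Icc 0 1 →
        volume A ≤ ENNReal.ofReal δ' →
        ∫ q in A, ‖ηm m q.1 - ηm m q.2‖ ^ p ≤ ε := by
  obtain ⟨hδ0, hδhalf⟩ := hδ
  have hp2 : p < 0 := hp.2
  have hp1 : (-1:ℝ) < p := hp.1
  -- number of arcs
  set N : ℕ := ⌈1/δ⌉₊ with hNdef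
  have hNδ : 1 ≤ (N:ℝ) * δ := by
    have h1 : 1/δ ≤ (N:ℝ) := Nat.le_ceil (1/δ)
    calc (1:ℝ) = (1/δ) * δ := by field_simp
      _ ≤ (N:ℝ) * δ := mul_le_mul_of_nonneg_right h1 hδ0.le
  have hN1 : 1 ≤ N := by
    by_contra h
    push_neg at h
    interval_cases N
    · simp at hNδ; linarith
  have hNpos : (0:ℝ) < (N:ℝ) := by exact_mod_cast hN1
  -- covering of [0,1] by the N arcs
  have cover : ∀ v ∈ Set.Icc (0:ℝ) 1, ∃ j : Fin N,
      v ∈ Set.Icc ((j:ℝ)*δ) ((j:ℝ)*δ+δ) := by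
    intro v hv
    by_cases hcase : ⌊v/δ⌋₊ < N
    · refine ⟨⟨⌊v/δ⌋₊, hcase⟩, ?_, ?_⟩
      · calc ((⌊v/δ⌋₊:ℝ))*δ ≤ (v/δ)*δ :=
            mul_le_mul_of_nonneg_right (Nat.floor_le (div_nonneg hv.1 hδ0.le)) hδ0.le
          _ = v := by field_simp
      · have h2 := Nat.lt_floor_add_one (v/δ)
        have h3 : v/δ * δ = v := by field_simp
        nlinarith
    · push_neg at hcase
      have h1 : (N:ℝ) ≤ v/δ := le_trans (by exact_mod_cast hcase) (Nat.floor_le (div_nonneg hv.1 hδ0.le))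
      have h3 : v/δ * δ = v := by field_simp
      have hv1 : (N:ℝ)*δ ≤ v := by nlinarith
      refine ⟨⟨N-1, by omega⟩, ?_, ?_⟩
      · show ((N-1:ℕ):ℝ)*δ ≤ v
        rw [Nat.cast_sub hN1]
        push_cast
        nlinarith
      · show v ≤ ((N-1:ℕ):ℝ)*δ+δ
        rw [Nat.cast_sub hN1]
        push_cast
        nlinarith [hv.2]
  have hKmeas : ∀ m, Measurable fun q : ℝ × ℝ => ‖ηm m q.1 - ηm m q.2‖ ^ p := fun m =>
    ((((hηm m).comp continuous_fst).sub ((hηm m).comp continuous_snd)).norm.measurable).pow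
      measurable_const
  -- bound of a set by sum over strips
  have sum_bound : ∀ m : ℕ, ∀ R : ℝ, 0 < R → ∀ E : Set (ℝ × ℝ), MeasurableSet E →
      E ⊆ Set.Icc 0 1 ×ˢ Set.Icc 0 1 →
      (∀ u v w : ℝ, (u, v) ∈ E → |v - w| ≤ δ →
        c / 2 * |v - w| ≤ ‖ηm m u - ηm m v‖ → v ∈ Set.Icc (w - R) (w + R)) →
      ∫⁻ q in E, ENNReal.ofReal (‖ηm m q.1 - ηm m q.2‖ ^ p) ≤
        (N : ℝ≥0∞) * ENNReal.ofReal ((c/2) ^ p * (2 * (R ^ (p+1) / (p+1)))) := by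
    intro m R hR E hEm hEsq hE
    set Sj : Fin N → Set (ℝ × ℝ) :=
      fun j => E ∩ (Set.univ ×ˢ Set.Icc ((j:ℝ)*δ) ((j:ℝ)*δ+δ)) with hSj
    have hcov : E ⊆ ⋃ j : Fin N, Sj j := by
      intro q hq
      obtain ⟨j, hj⟩ := cover q.2 (hEsq hq).2
      exact Set.mem_iUnion.2 ⟨j, hq, Set.mem_univ _, hj⟩
    have hstrip : ∀ j : Fin N, ∫⁻ q in Sj j, ENNReal.ofReal (‖ηm m q.1 - ηm m q.2‖ ^ p) ≤
        ENNReal.ofReal ((c/2) ^ p * (2 * (R ^ (p+1) / (p+1)))) := by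
      intro j
      apply strip_bound hp hc ⟨hδ0, hδhalf⟩ (hηm m) (hchordarc m) ((j:ℝ)*δ) R hR
      · exact hEm.inter (MeasurableSet.univ.prod measurableSet_Icc)
      · intro q hq
        exact ⟨(hEsq hq.1).1, hq.2.2⟩
      · intro u w hw hlow v hv
        have hvI : v ∈ Set.Icc ((j:ℝ)*δ) ((j:ℝ)*δ+δ) := hv.2.2
        have habs : |v - w| ≤ δ := by
          rw [abs_sub_le_iff]
          constructor <;> [skip; skip] <;>
            linarith [hvI.1, hvI.2, hw.1, hw.2]
        exact hE u v w hv.1 habs (hlow v hvI)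
    calc ∫⁻ q in E, ENNReal.ofReal (‖ηm m q.1 - ηm m q.2‖ ^ p)
        ≤ ∫⁻ q in ⋃ j : Fin N, Sj j, ENNReal.ofReal (‖ηm m q.1 - ηm m q.2‖ ^ p) :=
          lintegral_mono_set hcov
      _ ≤ ∑' j : Fin N, ∫⁻ q in Sj j, ENNReal.ofReal (‖ηm m q.1 - ηm m q.2‖ ^ p) :=
          lintegral_iUnion_le _ _
      _ ≤ ∑' _j : Fin N, ENNReal.ofReal ((c/2) ^ p * (2 * (R ^ (p+1) / (p+1)))) :=
          ENNReal.tsum_le_tsum hstrip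
      _ = (N : ℝ≥0∞) * ENNReal.ofReal ((c/2) ^ p * (2 * (R ^ (p+1) / (p+1)))) := by
          rw [tsum_fintype]
          simp [Finset.sum_const, Finset.card_univ, mul_comm]
  -- integrability
  have hint : ∀ m, IntegrableOn (fun q : ℝ × ℝ => ‖ηm m q.1 - ηm m q.2‖ ^ p)
      (Set.Icc 0 1 ×ˢ Set.Icc 0 1) volume := by
    intro m
    refine ⟨(hKmeas m).aestronglyMeasurable, ?_⟩
    rw [hasFiniteIntegral_iff_ofReal
      (Filter.Eventually.of_forall fun q => Real.rpow_nonneg (norm_nonneg _) p)]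
    have hE : ∀ u v w : ℝ, (u, v) ∈ Set.Icc (0:ℝ) 1 ×ˢ Set.Icc (0:ℝ) 1 → |v - w| ≤ δ →
        c / 2 * |v - w| ≤ ‖ηm m u - ηm m v‖ → v ∈ Set.Icc (w - δ) (w + δ) := by
      intro u v w _ habs _
      rw [Set.mem_Icc]
      have := abs_sub_le_iff.1 habs
      constructor <;> linarith [this.1, this.2]
    have := sum_bound m δ hδ0 _ (measurableSet_Icc.prod measurableSet_Icc) le_rfl hE
    exact lt_of_le_of_lt this
      (ENNReal.mul_lt_top (ENNReal.natCast_lt_top N) ENNReal.ofReal_lt_top)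
  refine ⟨hint, ?_⟩
  intro ε hε
  -- choose the threshold T
  set g : ℝ → ℝ := fun T => (c/2) ^ p * (2 * (((2/c) * T ^ (1/p)) ^ (p+1) / (p+1))) with hg
  have hgt0 : Filter.Tendsto g Filter.atTop (𝓝 0) := by
    set C₀ : ℝ := (c/2) ^ p * (2 * ((2/c) ^ (p+1) / (p+1))) with hC₀
    set q0 : ℝ := 1/p * (p+1) with hq0
    have hq0neg : q0 < 0 := by
      rw [hq0]
      have h1 : 1/p < 0 := by
        apply div_neg_of_pos_of_neg one_pos hp2
      have h2 : (0:ℝ) < p + 1 := by linarith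
      exact mul_neg_of_neg_of_pos h1 h2
    have heq : ∀ᶠ T in Filter.atTop, C₀ * T ^ q0 = g T := by
      filter_upwards [Filter.eventually_gt_atTop (0:ℝ)] with T hT
      rw [hg]
      simp only
      rw [Real.mul_rpow (by positivity) (Real.rpow_nonneg hT.le (1/p)),
        ← Real.rpow_mul hT.le]
      rw [hC₀, hq0]
      ring
    have hlim : Filter.Tendsto (fun T : ℝ => C₀ * T ^ q0) Filter.atTop (𝓝 0) := by
      have h1 : Filter.Tendsto (fun T : ℝ => T ^ q0) Filter.atTop (𝓝 0) := by
        have := tendsto_rpow_neg_atTop (by linarith : (0:ℝ) < -q0)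
        simpa using this
      simpa using h1.const_mul C₀
    exact hlim.congr' heq
  have hev : ∀ᶠ T in Filter.atTop, g T < ε / (2*N) :=
    hgt0.eventually_lt_const (by positivity)
  obtain ⟨T, hT1, hTg⟩ := ((Filter.eventually_ge_atTop (1:ℝ)).and hev).exists
  have hT0 : (0:ℝ) < T := lt_of_lt_of_le one_pos hT1
  refine ⟨ε / (2*T), by positivity, ?_⟩
  intro m A hAm hAsq hAvol
  set K : ℝ × ℝ → ℝ := fun q => ‖ηm m q.1 - ηm m q.2‖ ^ p with hK
  set Rt : ℝ := (2/c) * T ^ (1/p) with hRt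
  have hRtpos : 0 < Rt := by
    have := Real.rpow_pos_of_pos hT0 (1/p)
    positivity
  -- tail bound
  have hEii : ∀ u v w : ℝ,
      (u, v) ∈ (Set.Icc (0:ℝ) 1 ×ˢ Set.Icc (0:ℝ) 1) ∩ {q : ℝ × ℝ | T < K q} →
      |v - w| ≤ δ → c / 2 * |v - w| ≤ ‖ηm m u - ηm m v‖ →
      v ∈ Set.Icc (w - Rt) (w + Rt) := by
    intro u v w hvE _habs hlow1
    have hTK : T < ‖ηm m u - ηm m v‖ ^ p := hvE.2
    have hnormpos : 0 < ‖ηm m u - ηm m v‖ := by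
      rcases eq_or_lt_of_le (norm_nonneg (ηm m u - ηm m v)) with h | h
      · exfalso
        rw [← h, Real.zero_rpow (ne_of_lt hp2)] at hTK
        linarith
      · exact h
    have h5 : ‖ηm m u - ηm m v‖ ≤ T ^ (1/p) := by
      have h6 := Real.rpow_le_rpow_of_nonpos hT0 hTK.le
        (le_of_lt (div_neg_of_pos_of_neg one_pos hp2))
      rwa [← Real.rpow_mul (norm_nonneg _), mul_one_div_cancel (ne_of_lt hp2),
        Real.rpow_one] at h6
    have h7 : |v - w| ≤ Rt := by
      have h8 : c / 2 * |v - w| ≤ T ^ (1/p) := le_trans hlow1 h5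
      have h9 : |v - w| = (2/c) * (c / 2 * |v - w|) := by field_simp
      rw [h9, hRt]
      exact mul_le_mul_of_nonneg_left h8 (by positivity)
    rw [Set.mem_Icc]
    have := abs_le.1 h7
    constructor <;> linarith [this.1, this.2]
  have tailbound := sum_bound m Rt hRtpos
    ((Set.Icc (0:ℝ) 1 ×ˢ Set.Icc (0:ℝ) 1) ∩ {q : ℝ × ℝ | T < K q})
    ((measurableSet_Icc.prod measurableSet_Icc).inter
      (measurableSet_lt measurable_const (hKmeas m)))
    Set.inter_subset_left hEii
  have htail : ∫⁻ q in (Set.Icc (0:ℝ) 1 ×ˢ Set.Icc (0:ℝ) 1) ∩ {q : ℝ × ℝ | T < K q},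
      ENNReal.ofReal (K q) ≤ ENNReal.ofReal (ε/2) := by
    refine le_trans tailbound ?_
    have hgT : (c/2) ^ p * (2 * (Rt ^ (p+1) / (p+1))) = g T := rfl
    rw [hgT, ← ENNReal.ofReal_natCast N, ← ENNReal.ofReal_mul (Nat.cast_nonneg N)]
    apply ENNReal.ofReal_le_ofReal
    have h10 : (N:ℝ) * g T ≤ (N:ℝ) * (ε / (2*N)) :=
      mul_le_mul_of_nonneg_left hTg.le (Nat.cast_nonneg N)
    have h11 : (N:ℝ) * (ε / (2*N)) = ε/2 := by field_simp
    linarith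
  -- splitting
  have hsplit : A ⊆ (A ∩ {q : ℝ × ℝ | K q ≤ T}) ∪
      ((Set.Icc (0:ℝ) 1 ×ˢ Set.Icc (0:ℝ) 1) ∩ {q : ℝ × ℝ | T < K q}) := by
    intro q hq
    by_cases hKq : K q ≤ T
    · exact Or.inl ⟨hq, hKq⟩
    · exact Or.inr ⟨hAsq hq, not_le.1 hKq⟩
  have hbound : ∫⁻ q in A, ENNReal.ofReal (K q) ≤ ENNReal.ofReal ε := by
    calc ∫⁻ q in A, ENNReal.ofReal (K q)
        ≤ ∫⁻ q in (A ∩ {q : ℝ × ℝ | K q ≤ T}) ∪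
            ((Set.Icc (0:ℝ) 1 ×ˢ Set.Icc (0:ℝ) 1) ∩ {q : ℝ × ℝ | T < K q}),
            ENNReal.ofReal (K q) := lintegral_mono_set hsplit
      _ ≤ (∫⁻ q in A ∩ {q : ℝ × ℝ | K q ≤ T}, ENNReal.ofReal (K q)) +
          ∫⁻ q in (Set.Icc (0:ℝ) 1 ×ˢ Set.Icc (0:ℝ) 1) ∩ {q : ℝ × ℝ | T < K q},
            ENNReal.ofReal (K q) := lintegral_union_le _ _ _
      _ ≤ ENNReal.ofReal T * volume (A ∩ {q : ℝ × ℝ | K q ≤ T}) +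
            ENNReal.ofReal (ε/2) := by
          refine add_le_add ?_ htail
          calc ∫⁻ q in A ∩ {q : ℝ × ℝ | K q ≤ T}, ENNReal.ofReal (K q)
              ≤ ∫⁻ _q in A ∩ {q : ℝ × ℝ | K q ≤ T}, ENNReal.ofReal T :=
                setLIntegral_mono measurable_const
                  (fun q hq => ENNReal.ofReal_le_ofReal hq.2)
            _ = ENNReal.ofReal T * volume (A ∩ {q : ℝ × ℝ | K q ≤ T}) :=
                setLIntegral_const _ _
      _ ≤ ENNReal.ofReal T * ENNReal.ofReal (ε/(2*T)) + ENNReal.ofReal (ε/2) := by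
          refine add_le_add_left (mul_le_mul_right (?_ : volume (A ∩ {q : ℝ × ℝ | K q ≤ T}) ≤ ENNReal.ofReal (ε/(2*T))) _) _
          exact le_trans (measure_mono Set.inter_subset_left) hAvol
      _ = ENNReal.ofReal ε := by
          rw [← ENNReal.ofReal_mul hT0.le]
          have h12 : T * (ε/(2*T)) = ε/2 := by field_simp
          rw [h12, ← ENNReal.ofReal_add (by positivity) (by positivity)]
          norm_num
  -- convert to Bochner integral
  have hIA : IntegrableOn K A volume := (hint m).mono_set hAsq
  have heq : ∫ q in A, K q = (∫⁻ q in A, ENNReal.ofReal (K q)).toReal :=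
    integral_eq_lintegral_of_nonneg_ae
      (Filter.Eventually.of_forall fun q => Real.rpow_nonneg (norm_nonneg _) p)
      hIA.aestronglyMeasurable
  show ∫ q in A, K q ≤ ε
  rw [heq]
  exact ENNReal.toReal_le_of_le_ofReal hε.le hbound
end
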